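/- arXiv:1912.04193 — 7 statements merged into one kernel-verified Lean document; each statement's English description precedes it below -/
import Mathlib

section
/- For every real number ν and every z > 0, the two classical integral representations of the modified Bessel function of the second kind agree: ∫₀^∞ e^{-z·cosh(t)} · cosh(ν t) dt = 2^{-ν-1} · z^ν · ∫₀^∞ e^{-u} · e^{-z²/(4u)} · u^{-ν-1} du. -/
open Real MeasureTheory

lemma cosh_quad_le (t : ℝ) : 1 + t ^ 2 / 2 ≤ Real.cosh t := by
  have h1 : Real.cosh t = 1 + 2 * Real.sinh (t / 2) ^ 2 := by
    have h := Real.cosh_two_mul (t / 2)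
    rw [mul_div_cancel₀ _ (two_ne_zero)] at h
    rw [h, Real.cosh_sq']; ring
  have h3 : (t / 2) ^ 2 ≤ Real.sinh (t / 2) ^ 2 := by
    have habs : |t / 2| ≤ |Real.sinh (t / 2)| := by
      rw [Real.abs_sinh]
      exact (Real.self_le_sinh_iff.mpr (abs_nonneg _))
    calc (t / 2) ^ 2 = |t / 2| ^ 2 := (sq_abs _).symm
      _ ≤ |Real.sinh (t / 2)| ^ 2 := pow_le_pow_left₀ (abs_nonneg _) habs 2
      _ = Real.sinh (t / 2) ^ 2 := sq_abs _
  nlinarith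

lemma integrable_exp_cosh (ν z : ℝ) (hz : 0 < z) :
    Integrable (fun t : ℝ => Real.exp (-z * Real.cosh t + ν * t)) := by
  have hd : Integrable (fun t : ℝ =>
      Real.exp (-z + ν ^ 2 / (2 * z)) * Real.exp (-(z / 2) * (t - ν / z) ^ 2)) :=
    ((integrable_exp_neg_mul_sq (half_pos hz)).comp_sub_right (ν / z)).const_mul _
  refine hd.mono' (Continuous.aestronglyMeasurable (by continuity)) ?_
  filter_upwards with t
  rw [Real.norm_eq_abs, abs_of_pos (Real.exp_pos _), ← Real.exp_add, Real.exp_le_exp]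
  have h := cosh_quad_le t
  have hz' := hz.ne'
  have h1 : -z * Real.cosh t ≤ -z * (1 + t ^ 2 / 2) := by nlinarith
  have expand : -z + ν ^ 2 / (2 * z) + -(z / 2) * (t - ν / z) ^ 2
      = -z * (1 + t ^ 2 / 2) + ν * t := by field_simp; ring
  linarith [expand.ge]

/-- The two classical integral representations of the modified Bessel function of the
second kind `K_ν(z)` agree for every real `ν` and every `z > 0`. -/
theorem besselK_integral_representations (ν z : ℝ) (hz : 0 < z) :
    ∫ t in Set.Ioi (0:ℝ), Real.exp (-z * Real.cosh t) * Real.cosh (ν * t)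
      = (2:ℝ) ^ (-ν - 1) * z ^ ν *
        ∫ u in Set.Ioi (0:ℝ), Real.exp (-u) * Real.exp (-z ^ 2 / (4 * u)) * u ^ (-ν - 1) := by
  set c : ℝ := z / 2 with hc
  have hc0 : 0 < c := half_pos hz
  set g : ℝ → ℝ := fun u => Real.exp (-u) * Real.exp (-z ^ 2 / (4 * u)) * u ^ (-ν - 1) with hg
  set A : ℝ := ∫ t in Set.Ioi (0:ℝ), Real.exp (-z * Real.cosh t + ν * t) with hA
  set B : ℝ := ∫ t in Set.Ioi (0:ℝ), Real.exp (-z * Real.cosh t + -ν * t) with hB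
  have hIntA : IntegrableOn (fun t => Real.exp (-z * Real.cosh t + ν * t)) (Set.Ioi 0) :=
    (integrable_exp_cosh ν z hz).integrableOn
  have hIntB : IntegrableOn (fun t => Real.exp (-z * Real.cosh t + -ν * t)) (Set.Ioi 0) :=
    (integrable_exp_cosh (-ν) z hz).integrableOn
  -- images
  have himg1 : (fun t : ℝ => c * Real.exp (-t)) '' Set.Ioi 0 = Set.Ioo 0 c := by
    ext u
    simp only [Set.mem_image, Set.mem_Ioi, Set.mem_Ioo]
    constructor
    · rintro ⟨t, ht, rfl⟩
      have h1 : Real.exp (-t) < Real.exp 0 := Real.exp_lt_exp.mpr (by linarith)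
      rw [Real.exp_zero] at h1
      exact ⟨by positivity, by nlinarith⟩
    · rintro ⟨hu0, huc⟩
      refine ⟨Real.log (c / u), Real.log_pos ((one_lt_div hu0).mpr huc), ?_⟩
      rw [Real.exp_neg, Real.exp_log (by positivity)]
      field_simp
  have himg2 : (fun t : ℝ => c * Real.exp t) '' Set.Ioi 0 = Set.Ioi c := by
    ext u
    simp only [Set.mem_image, Set.mem_Ioi]
    constructor
    · rintro ⟨t, ht, rfl⟩
      have h1 : Real.exp 0 < Real.exp t := Real.exp_lt_exp.mpr ht
      rw [Real.exp_zero] at h1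
      nlinarith
    · intro hcu
      have hu0 : 0 < u := hc0.trans hcu
      refine ⟨Real.log (u / c), Real.log_pos ((one_lt_div hc0).mpr hcu), ?_⟩
      rw [Real.exp_log (by positivity)]
      field_simp
  -- derivatives
  have hder1 : ∀ x ∈ Set.Ioi (0:ℝ),
      HasDerivWithinAt (fun t : ℝ => c * Real.exp (-t)) (-(c * Real.exp (-x))) (Set.Ioi 0) x := by
    intro x _
    have h : HasDerivAt (fun t : ℝ => c * Real.exp (-t)) (-(c * Real.exp (-x))) x := by
      have := ((Real.hasDerivAt_exp (-x)).comp x (hasDerivAt_neg x)).const_mul c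
      exact this.congr_deriv (by ring)
    exact h.hasDerivWithinAt
  have hder2 : ∀ x ∈ Set.Ioi (0:ℝ),
      HasDerivWithinAt (fun t : ℝ => c * Real.exp t) (c * Real.exp x) (Set.Ioi 0) x := by
    intro x _
    exact ((Real.hasDerivAt_exp x).const_mul c).hasDerivWithinAt
  -- injectivity
  have hinj1 : Set.InjOn (fun t : ℝ => c * Real.exp (-t)) (Set.Ioi 0) := fun a _ b _ h =>
    neg_injective (Real.exp_injective (mul_left_cancel₀ hc0.ne' h))
  have hinj2 : Set.InjOn (fun t : ℝ => c * Real.exp t) (Set.Ioi 0) := fun a _ b _ h =>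
    Real.exp_injective (mul_left_cancel₀ hc0.ne' h)
  -- pointwise identities
  have hpt1 : ∀ t : ℝ, |(-(c * Real.exp (-t)))| • g (c * Real.exp (-t))
      = c ^ (-ν) * Real.exp (-z * Real.cosh t + ν * t) := by
    intro t
    have he : (0:ℝ) < Real.exp (-t) := Real.exp_pos _
    have hu : 0 < c * Real.exp (-t) := by positivity
    have h4 : -z ^ 2 / (4 * (c * Real.exp (-t))) = -(c * Real.exp t) := by
      rw [hc, Real.exp_neg]
      field_simp
      ring
    have h5 : c ^ (-ν) = c ^ (-ν - 1) * c := by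
      conv_lhs => rw [show -ν = -ν - 1 + 1 by ring]
      rw [Real.rpow_add_one hc0.ne']
    have h7 : (c * Real.exp (-t)) ^ (-ν - 1) = c ^ (-ν - 1) * Real.exp (-t * (-ν - 1)) := by
      rw [Real.mul_rpow hc0.le he.le, Real.exp_mul]
    have h6 : Real.exp (-t) * (Real.exp (-(c * Real.exp (-t))) * Real.exp (-(c * Real.exp t))
        * Real.exp (-t * (-ν - 1))) = Real.exp (-z * Real.cosh t + ν * t) := by
      simp only [← Real.exp_add]
      congr 1
      rw [Real.cosh_eq, hc]
      ring
    rw [smul_eq_mul, abs_neg, abs_of_pos hu, hg]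
    simp only []
    rw [h4, h5, h7]
    linear_combination (c * c ^ (-ν - 1)) * h6
  have hpt2 : ∀ t : ℝ, |(c * Real.exp t)| • g (c * Real.exp t)
      = c ^ (-ν) * Real.exp (-z * Real.cosh t + -ν * t) := by
    intro t
    have he : (0:ℝ) < Real.exp t := Real.exp_pos _
    have hu : 0 < c * Real.exp t := by positivity
    have h4 : -z ^ 2 / (4 * (c * Real.exp t)) = -(c * Real.exp (-t)) := by
      rw [hc, Real.exp_neg]
      field_simp
      ring
    have h5 : c ^ (-ν) = c ^ (-ν - 1) * c := by
      conv_lhs => rw [show -ν = -ν - 1 + 1 by ring]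
      rw [Real.rpow_add_one hc0.ne']
    have h7 : (c * Real.exp t) ^ (-ν - 1) = c ^ (-ν - 1) * Real.exp (t * (-ν - 1)) := by
      rw [Real.mul_rpow hc0.le he.le, Real.exp_mul]
    have h6 : Real.exp t * (Real.exp (-(c * Real.exp t)) * Real.exp (-(c * Real.exp (-t)))
        * Real.exp (t * (-ν - 1))) = Real.exp (-z * Real.cosh t + -ν * t) := by
      simp only [← Real.exp_add]
      congr 1
      rw [Real.cosh_eq, hc]
      ring
    rw [smul_eq_mul, abs_of_pos hu, hg]
    simp only []
    rw [h4, h5, h7]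
    linear_combination (c * c ^ (-ν - 1)) * h6
  -- substitution 1 : ∫ over Ioo 0 c
  have hsub1 : ∫ u in Set.Ioo 0 c, g u = c ^ (-ν) * A := by
    rw [← himg1,
      integral_image_eq_integral_abs_deriv_smul measurableSet_Ioi hder1 hinj1 g,
      setIntegral_congr_fun measurableSet_Ioi (fun t _ => hpt1 t), integral_const_mul]
  have hsub2 : ∫ u in Set.Ioi c, g u = c ^ (-ν) * B := by
    rw [← himg2,
      integral_image_eq_integral_abs_deriv_smul measurableSet_Ioi hder2 hinj2 g,
      setIntegral_congr_fun measurableSet_Ioi (fun t _ => hpt2 t), integral_const_mul]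
  -- integrability of g on the pieces
  have hgint1 : IntegrableOn g (Set.Ioo 0 c) := by
    rw [← himg1,
      integrableOn_image_iff_integrableOn_abs_deriv_smul measurableSet_Ioi hder1 hinj1 g]
    exact IntegrableOn.congr_fun (hIntA.const_mul (c ^ (-ν)))
      (fun t _ => (hpt1 t).symm) measurableSet_Ioi
  have hgint2 : IntegrableOn g (Set.Ioi c) := by
    rw [← himg2,
      integrableOn_image_iff_integrableOn_abs_deriv_smul measurableSet_Ioi hder2 hinj2 g]
    exact IntegrableOn.congr_fun (hIntB.const_mul (c ^ (-ν)))
      (fun t _ => (hpt2 t).symm) measurableSet_Ioi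
  -- split the u-integral
  have hsplit : ∫ u in Set.Ioi (0:ℝ), g u
      = (∫ u in Set.Ioo 0 c, g u) + ∫ u in Set.Ioi c, g u := by
    rw [← Set.Ioo_union_Ici_eq_Ioi hc0,
      setIntegral_union (Set.disjoint_left.mpr fun u hu hu' => (hu.2.not_ge hu'))
        measurableSet_Ici hgint1 (Iff.mpr integrableOn_Ici_iff_integrableOn_Ioi hgint2),
      integral_Ici_eq_integral_Ioi]
  -- rewrite LHS
  have hlhs : ∫ t in Set.Ioi (0:ℝ), Real.exp (-z * Real.cosh t) * Real.cosh (ν * t)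
      = (A + B) / 2 := by
    have heq : ∀ t : ℝ, Real.exp (-z * Real.cosh t) * Real.cosh (ν * t)
        = (Real.exp (-z * Real.cosh t + ν * t) + Real.exp (-z * Real.cosh t + -ν * t)) / 2 := by
      intro t
      rw [Real.cosh_eq (ν * t), Real.exp_add, Real.exp_add, neg_mul ν t]
      ring
    rw [setIntegral_congr_fun measurableSet_Ioi (fun t _ => heq t), integral_div,
      integral_add hIntA hIntB]
  -- final computation
  have key : (2:ℝ) ^ (-ν - 1) * z ^ ν * c ^ (-ν) = 1 / 2 := by
    rw [Real.rpow_def_of_pos two_pos, Real.rpow_def_of_pos hz, Real.rpow_def_of_pos hc0,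
      ← Real.exp_add, ← Real.exp_add, hc, Real.log_div hz.ne' two_ne_zero,
      show Real.log 2 * (-ν - 1) + Real.log z * ν + (Real.log z - Real.log 2) * -ν
        = -Real.log 2 by ring,
      Real.exp_neg, Real.exp_log two_pos]
    norm_num
  rw [hlhs, hsplit, hsub1, hsub2]
  have hfin : (2:ℝ) ^ (-ν - 1) * z ^ ν * (c ^ (-ν) * A + c ^ (-ν) * B)
      = ((2:ℝ) ^ (-ν - 1) * z ^ ν * c ^ (-ν)) * (A + B) := by ring
  rw [hfin, key]
  ring
end

section
/- Let a > 0, t > 0 and x ∈ ℝ. Then ∫₀^∞ (2πs)^{-1/2} e^{-(x-as)²/(2s)} · (t/(√(2π) s^{3/2})) e^{-t²/(2s)} ds = (a t e^{ax}/π) · K₁(a√(x²+t²)) / √(x²+t²). In other words, the density at time t of a Brownian motion with drift a subordinated by an independent 1/2-stable subordinator has the stated closed form. -/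
open Real MeasureTheory Set

/-- The modified Bessel function of the second kind, `K_ν(z)`,
for `ν : ℝ` and `z > 0`. -/
noncomputable def besselK (ν z : ℝ) : ℝ :=
  ∫ t in Set.Ioi (0:ℝ), Real.exp (-z * Real.cosh t) * Real.cosh (ν * t)

lemma image_mul_exp {c : ℝ} (hc : 0 < c) :
    (fun u => c * Real.exp u) '' Set.Ioi 0 = Set.Ioi c := by
  ext v
  simp only [Set.mem_image, Set.mem_Ioi]
  constructor
  · rintro ⟨u, hu, rfl⟩
    have : (1:ℝ) < Real.exp u := by simpa using Real.exp_lt_exp.2 hu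
    simpa using (mul_lt_mul_of_pos_left this hc)
  · intro hv
    have hvp : 0 < v := hc.trans hv
    have hv0 : 0 < v / c := by positivity
    refine ⟨Real.log (v / c), ?_, ?_⟩
    · exact Real.log_pos (by rw [lt_div_iff₀ hc]; simpa using hv)
    · rw [Real.exp_log hv0]; field_simp

lemma image_mul_exp_neg {c : ℝ} (hc : 0 < c) :
    (fun u => c * Real.exp (-u)) '' Set.Ioi 0 = Set.Ioo 0 c := by
  ext v
  simp only [Set.mem_image, Set.mem_Ioi, Set.mem_Ioo]
  constructor
  · rintro ⟨u, hu, rfl⟩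
    refine ⟨by positivity, ?_⟩
    have : Real.exp (-u) < 1 := by
      have : -u < 0 := by linarith
      simpa using Real.exp_lt_exp.2 this
    simpa using (mul_lt_mul_of_pos_left this hc)
  · rintro ⟨hv0, hvc⟩
    have hv0' : 0 < v / c := by positivity
    refine ⟨-Real.log (v / c), ?_, ?_⟩
    · have : Real.log (v / c) < 0 :=
        Real.log_neg hv0' (by rw [div_lt_one hc]; exact hvc)
      linarith
    · rw [neg_neg, Real.exp_log hv0']; field_simp

lemma key (a b : ℝ) (ha : 0 < a) (hb : 0 < b) :
    ∫ s in Set.Ioi (0:ℝ), Real.exp (-(b / (2*s) + a^2 * s / 2)) / s^2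
      = (2 * a / Real.sqrt b) * besselK 1 (a * Real.sqrt b) := by
  have hsb : 0 < Real.sqrt b := Real.sqrt_pos.2 hb
  have hsb2 : Real.sqrt b * Real.sqrt b = b := Real.mul_self_sqrt hb.le
  set c : ℝ := Real.sqrt b / a with hc_def
  have hc : 0 < c := by positivity
  set z : ℝ := a * Real.sqrt b with hz_def
  have hz : 0 < z := by positivity
  set F : ℝ → ℝ := fun s => Real.exp (-(b / (2*s) + a^2 * s / 2)) / s^2 with hF_def
  -- pointwise identities under the two substitutions
  have hpt1 : ∀ u : ℝ, |c * Real.exp u| • F (c * Real.exp u)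
      = Real.exp (-u) / c * Real.exp (-z * Real.cosh u) := by
    intro u
    have he : (0:ℝ) < Real.exp u := Real.exp_pos u
    have hexp : b / (2*(c*Real.exp u)) + a^2 * (c*Real.exp u) / 2 = z * Real.cosh u := by
      rw [Real.cosh_eq, hz_def, hc_def]
      rw [Real.exp_neg]
      field_simp
      ring_nf
      rw [Real.sq_sqrt hb.le]
    rw [smul_eq_mul, abs_of_pos (by positivity), hF_def]
    simp only []
    rw [hexp, Real.exp_neg (z * Real.cosh u), Real.exp_neg u]
    rw [neg_mul z, Real.exp_neg (z * Real.cosh u)]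
    field_simp
  have hpt2 : ∀ u : ℝ, |c * (Real.exp (-u) * -1)| • F (c * Real.exp (-u))
      = Real.exp u / c * Real.exp (-z * Real.cosh u) := by
    intro u
    have he : (0:ℝ) < Real.exp (-u) := Real.exp_pos _
    have hexp : b / (2*(c*Real.exp (-u))) + a^2 * (c*Real.exp (-u)) / 2 = z * Real.cosh u := by
      rw [Real.cosh_eq, hz_def, hc_def]
      rw [Real.exp_neg]
      field_simp
      ring_nf
      rw [Real.sq_sqrt hb.le]
      ring
    have habs : |c * (Real.exp (-u) * -1)| = c * Real.exp (-u) := by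
      rw [abs_of_neg (by nlinarith), ]
      ring
    rw [smul_eq_mul, habs, hF_def]
    simp only []
    rw [hexp, neg_mul z, Real.exp_neg (z * Real.cosh u), Real.exp_neg u]
    field_simp
  -- derivative and injectivity facts
  have hderiv1 : ∀ u ∈ Set.Ioi (0:ℝ), HasDerivWithinAt (fun u => c * Real.exp u)
      (c * Real.exp u) (Set.Ioi 0) u :=
    fun u _ => ((Real.hasDerivAt_exp u).const_mul c).hasDerivWithinAt
  have hderiv2 : ∀ u ∈ Set.Ioi (0:ℝ), HasDerivWithinAt (fun u => c * Real.exp (-u))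
      (c * (Real.exp (-u) * -1)) (Set.Ioi 0) u := by
    intro u _
    exact (((Real.hasDerivAt_exp (-u)).comp u (hasDerivAt_neg u)).const_mul c).hasDerivWithinAt
  have hinj1 : Set.InjOn (fun u => c * Real.exp u) (Set.Ioi 0) := by
    intro u _ v _ h
    exact Real.exp_injective (mul_left_cancel₀ hc.ne' h)
  have hinj2 : Set.InjOn (fun u => c * Real.exp (-u)) (Set.Ioi 0) := by
    intro u _ v _ h
    have := Real.exp_injective (mul_left_cancel₀ hc.ne' h)
    linarith [neg_injective this]
  -- integrability of F on Ioi 0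
  have hFmeas : Measurable F := by
    rw [hF_def]; fun_prop
  have hFint : IntegrableOn F (Set.Ioi 0) := by
    refine Integrable.mono' (((exp_neg_integrableOn_Ioi 0 (by positivity : (0:ℝ) < a^2/2)).const_mul
      (16/b^2))) (hFmeas.aestronglyMeasurable.restrict) ?_
    filter_upwards [ae_restrict_mem measurableSet_Ioi] with s hs
    have hs0 : (0:ℝ) < s := hs
    have h1 : b/(4*s) + 1 ≤ Real.exp (b/(4*s)) := Real.add_one_le_exp _
    have h3 : b^2 ≤ 16 * s^2 * Real.exp (b/(2*s)) := by
      have h2 : Real.exp (b/(2*s)) = Real.exp (b/(4*s)) * Real.exp (b/(4*s)) := by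
        rw [← Real.exp_add]; congr 1; field_simp; ring
      have h4 : b + 4*s ≤ 4*s*Real.exp (b/(4*s)) := by
        have := mul_le_mul_of_nonneg_left h1 (by positivity : (0:ℝ) ≤ 4*s)
        calc b + 4*s = 4*s*(b/(4*s) + 1) := by field_simp
        _ ≤ 4*s*Real.exp (b/(4*s)) := this
      nlinarith [Real.exp_pos (b/(4*s)), hs0, hb]
    have h6 : Real.exp (-(b/(2*s))) ≤ 16*s^2/b^2 := by
      rw [Real.exp_neg, inv_eq_one_div, div_le_div_iff₀ (Real.exp_pos _) (by positivity)]
      nlinarith [h3]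
    have h5 : F s = Real.exp (-(b/(2*s))) * Real.exp (-(a^2/2)*s) / s^2 := by
      rw [hF_def]
      simp only []
      rw [← Real.exp_add]
      congr 2
      ring
    rw [Real.norm_eq_abs, abs_of_nonneg (by rw [hF_def]; positivity), h5]
    calc Real.exp (-(b/(2*s))) * Real.exp (-(a^2/2)*s) / s^2
        ≤ (16*s^2/b^2) * Real.exp (-(a^2/2)*s) / s^2 := by
          gcongr
      _ = 16/b^2 * Real.exp (-(a^2/2)*s) := by field_simp
  -- the two substitution identities
  have hsub1 : ∫ s in Set.Ioi c, F s
      = ∫ u in Set.Ioi (0:ℝ), Real.exp (-u) / c * Real.exp (-z * Real.cosh u) := by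
    rw [← image_mul_exp hc,
      integral_image_eq_integral_abs_deriv_smul measurableSet_Ioi hderiv1 hinj1]
    exact setIntegral_congr_fun measurableSet_Ioi fun u _ => hpt1 u
  have hsub2 : ∫ s in Set.Ioo 0 c, F s
      = ∫ u in Set.Ioi (0:ℝ), Real.exp u / c * Real.exp (-z * Real.cosh u) := by
    rw [← image_mul_exp_neg hc,
      integral_image_eq_integral_abs_deriv_smul measurableSet_Ioi hderiv2 hinj2]
    exact setIntegral_congr_fun measurableSet_Ioi fun u _ => hpt2 u
  -- integrability of the transformed integrands
  have hI1 : IntegrableOn (fun u => Real.exp (-u) / c * Real.exp (-z * Real.cosh u))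
      (Set.Ioi 0) := by
    have := (integrableOn_image_iff_integrableOn_abs_deriv_smul measurableSet_Ioi
        hderiv1 hinj1 F).1
      (by rw [image_mul_exp hc]; exact hFint.mono_set (Set.Ioi_subset_Ioi hc.le))
    exact this.congr_fun (fun u _ => hpt1 u) measurableSet_Ioi
  have hI2 : IntegrableOn (fun u => Real.exp u / c * Real.exp (-z * Real.cosh u))
      (Set.Ioi 0) := by
    have := (integrableOn_image_iff_integrableOn_abs_deriv_smul measurableSet_Ioi
        hderiv2 hinj2 F).1
      (by rw [image_mul_exp_neg hc]; exact hFint.mono_set Set.Ioo_subset_Ioi_self)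
    exact this.congr_fun (fun u _ => hpt2 u) measurableSet_Ioi
  -- split the integral at c
  have hdisj : Disjoint (Set.Ioo (0:ℝ) c) (Set.Ici c) := by
    rw [Set.disjoint_left]
    rintro s ⟨_, h2⟩ h3
    exact absurd h3 (not_le.2 h2)
  have hsplit : ∫ s in Set.Ioi (0:ℝ), F s
      = (∫ s in Set.Ioo 0 c, F s) + ∫ s in Set.Ioi c, F s := by
    rw [← Set.Ioo_union_Ici_eq_Ioi hc,
      setIntegral_union hdisj measurableSet_Ici
        (hFint.mono_set (by rw [← Set.Ioo_union_Ici_eq_Ioi hc]; exact Set.subset_union_left))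
        (hFint.mono_set (by rw [← Set.Ioo_union_Ici_eq_Ioi hc]; exact Set.subset_union_right)),
      integral_Ici_eq_integral_Ioi]
  have hsum : ∫ s in Set.Ioi (0:ℝ), F s = (2/c) * besselK 1 z := by
    rw [hsplit, hsub1, hsub2, ← integral_add hI2 hI1]
    rw [besselK, ← integral_const_mul]
    apply setIntegral_congr_fun measurableSet_Ioi
    intro u _
    simp only [one_mul]
    rw [Real.cosh_eq]
    field_simp
  rw [hsum, hc_def, hz_def]
  rw [div_div_eq_mul_div]

/-- The density at time `t` of a Brownian motion with drift `a > 0` subordinated by an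
independent 1/2-stable subordinator has the closed form
`p_t(x) = (a t e^{ax}/π) K₁(a√(x²+t²))/√(x²+t²)`. -/
theorem subordinated_density_closed_form (a t x : ℝ) (ha : 0 < a) (ht : 0 < t) :
    ∫ s in Set.Ioi (0:ℝ),
        (1 / Real.sqrt (2 * π * s)) * Real.exp (-(x - a * s) ^ 2 / (2 * s)) *
          (t / (Real.sqrt (2 * π) * s ^ ((3:ℝ)/2)) * Real.exp (-t ^ 2 / (2 * s)))
      = a * t * Real.exp (a * x) / π * besselK 1 (a * Real.sqrt (x ^ 2 + t ^ 2)) /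
          Real.sqrt (x ^ 2 + t ^ 2) := by
  have hb : 0 < x^2 + t^2 := by positivity
  have hπ : 0 < π := Real.pi_pos
  have hsb : 0 < Real.sqrt (x^2 + t^2) := Real.sqrt_pos.2 hb
  have hstep : ∀ s ∈ Set.Ioi (0:ℝ),
      (1 / Real.sqrt (2 * π * s)) * Real.exp (-(x - a * s) ^ 2 / (2 * s)) *
        (t / (Real.sqrt (2 * π) * s ^ ((3:ℝ)/2)) * Real.exp (-t ^ 2 / (2 * s)))
      = (t * Real.exp (a*x) / (2*π)) *
          (Real.exp (-((x^2+t^2) / (2*s) + a^2 * s / 2)) / s^2) := by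
    intro s hs
    have hs0 : (0:ℝ) < s := hs
    have hss : Real.sqrt s * Real.sqrt s = s := Real.mul_self_sqrt hs0.le
    have h2π : Real.sqrt (2*π) * Real.sqrt (2*π) = 2*π := Real.mul_self_sqrt (by positivity)
    have hs2 : Real.sqrt (2*π*s) = Real.sqrt (2*π) * Real.sqrt s :=
      Real.sqrt_mul (by positivity) s
    have h32 : s ^ ((3:ℝ)/2) = s * Real.sqrt s := by
      rw [show (3:ℝ)/2 = 1 + 1/2 by norm_num, Real.rpow_add hs0, Real.rpow_one,
        ← Real.sqrt_eq_rpow]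
    have hexp : Real.exp (-(x - a*s)^2/(2*s)) * Real.exp (-t^2/(2*s))
        = Real.exp (a*x) * Real.exp (-((x^2+t^2)/(2*s) + a^2*s/2)) := by
      rw [← Real.exp_add, ← Real.exp_add]
      congr 1
      field_simp
      ring
    calc (1 / Real.sqrt (2*π*s)) * Real.exp (-(x - a*s)^2/(2*s)) *
          (t / (Real.sqrt (2*π) * s^((3:ℝ)/2)) * Real.exp (-t^2/(2*s)))
        = (Real.exp (-(x-a*s)^2/(2*s)) * Real.exp (-t^2/(2*s))) *
            (t / (Real.sqrt (2*π*s) * (Real.sqrt (2*π) * s^((3:ℝ)/2)))) := by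
          ring
      _ = (Real.exp (a*x) * Real.exp (-((x^2+t^2)/(2*s) + a^2*s/2))) * (t / (2*π*s^2)) := by
          rw [hexp, hs2, h32]
          congr 1
          rw [show Real.sqrt (2*π) * Real.sqrt s * (Real.sqrt (2*π) * (s * Real.sqrt s))
            = (Real.sqrt (2*π) * Real.sqrt (2*π)) * ((Real.sqrt s * Real.sqrt s) * s) by ring,
            h2π, hss]
          ring
      _ = (t * Real.exp (a*x) / (2*π)) *
            (Real.exp (-((x^2+t^2) / (2*s) + a^2 * s / 2)) / s^2) := by
          field_simp
  rw [setIntegral_congr_fun measurableSet_Ioi hstep, integral_const_mul,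
    key a (x^2+t^2) ha hb]
  field_simp
end

section
/- Let a > 0 and x ∈ ℝ with x ≠ 0. Then ∫₀^∞ (2πs)^{-1/2} e^{-(x-as)²/(2s)} · (2π)^{-1/2} s^{-3/2} ds = a e^{ax} K₁(a|x|) / (π |x|). In particular the Lévy measure of the Brownian motion with drift a subordinated by an independent 1/2-stable subordinator has density ν(x) = (a e^{ax}/π)·K₁(a|x|)/|x| on ℝ\{0}. -/
open Real MeasureTheory

open Set Filter Asymptotics

lemma coshExp_integrableOn_Ioi {z : ℝ} (hz : 0 < z) :
    IntegrableOn (fun t : ℝ => Real.cosh t * Real.exp (-z * Real.cosh t)) (Ioi 0) := by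
  apply integrable_of_isBigO_exp_neg (b := 1) one_pos
  · fun_prop
  · rw [isBigO_iff]
    refine ⟨1, ?_⟩
    have h1 : ∀ᶠ t : ℝ in atTop, ‖t ^ 1‖ ≤ (z / 4) * ‖Real.exp t‖ :=
      isLittleO_pow_exp_atTop.def (by positivity)
    filter_upwards [h1, eventually_ge_atTop (0:ℝ)] with t ht ht0
    simp only [pow_one, Real.norm_eq_abs] at ht ⊢
    have ht' : t ≤ z / 4 * Real.exp t := by
      have := le_trans (le_abs_self t) ht
      rwa [abs_of_nonneg (Real.exp_pos t).le] at this
    rw [abs_of_nonneg (by positivity), abs_of_nonneg (Real.exp_pos _).le]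
    have hmt : Real.exp (-t) ≤ Real.exp t := Real.exp_le_exp.2 (by linarith)
    have hce : Real.cosh t ≤ Real.exp t := by
      rw [Real.cosh_eq]; linarith
    have hec : Real.exp t / 2 ≤ Real.cosh t := by
      rw [Real.cosh_eq]; nlinarith [Real.exp_pos (-t)]
    calc Real.cosh t * Real.exp (-z * Real.cosh t)
        ≤ Real.exp t * Real.exp (-z * (Real.exp t / 2)) := by
          apply mul_le_mul hce _ (Real.exp_pos _).le (Real.exp_pos _).le
          apply Real.exp_le_exp.2
          nlinarith
      _ = Real.exp (t - z / 2 * Real.exp t) := by rw [← Real.exp_add]; ring_nf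
      _ ≤ 1 * Real.exp (-1 * t) := by
          rw [one_mul, neg_one_mul, Real.exp_le_exp]
          nlinarith

lemma coshExp_integrable {z : ℝ} (hz : 0 < z) :
    Integrable (fun t : ℝ => Real.cosh t * Real.exp (-z * Real.cosh t)) := by
  have hIoi := coshExp_integrableOn_Ioi hz
  have hIic : IntegrableOn (fun t : ℝ => Real.cosh t * Real.exp (-z * Real.cosh t)) (Iic 0) := by
    rw [← Measure.map_neg_eq_self (volume : Measure ℝ)]
    have m : MeasurableEmbedding fun x : ℝ => -x := (Homeomorph.neg ℝ).measurableEmbedding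
    rw [m.integrableOn_map_iff]
    simp only [Function.comp_def, Real.cosh_neg, neg_preimage, neg_Iic, neg_zero]
    exact Iff.mpr integrableOn_Ici_iff_integrableOn_Ioi hIoi
  have := hIic.union hIoi
  rwa [Iic_union_Ioi, integrableOn_univ] at this

lemma exp_neg_mul_cosh_integral {z : ℝ} (hz : 0 < z) :
    ∫ t : ℝ, Real.exp (-t) * Real.exp (-z * Real.cosh t) = 2 * besselK 1 z := by
  set h : ℝ → ℝ := fun t => Real.cosh t * Real.exp (-z * Real.cosh t) with hh
  have hInt : Integrable h := coshExp_integrable hz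
  have key : ∀ t : ℝ, Real.exp (-t) * Real.exp (-z * Real.cosh t)
      + Real.exp t * Real.exp (-z * Real.cosh t) = 2 * h t := by
    intro t
    rw [hh]
    simp only [Real.cosh_eq]
    ring
  have hf1 : Integrable (fun t : ℝ => Real.exp (-t) * Real.exp (-z * Real.cosh t)) := by
    refine (hInt.const_mul 2).mono' (Continuous.aestronglyMeasurable (by continuity)) ?_
    filter_upwards with t
    rw [Real.norm_eq_abs, abs_of_nonneg (by positivity)]
    have : Real.exp (-t) ≤ 2 * Real.cosh t := by
      rw [Real.cosh_eq]; nlinarith [Real.exp_pos t]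
    have h2 : (0:ℝ) < Real.exp (-z * Real.cosh t) := Real.exp_pos _
    calc Real.exp (-t) * Real.exp (-z * Real.cosh t)
        ≤ 2 * Real.cosh t * Real.exp (-z * Real.cosh t) := by nlinarith
      _ = 2 * h t := by rw [hh]; ring
  have hf2 : Integrable (fun t : ℝ => Real.exp t * Real.exp (-z * Real.cosh t)) := by
    refine (hInt.const_mul 2).mono' (Continuous.aestronglyMeasurable (by continuity)) ?_
    filter_upwards with t
    rw [Real.norm_eq_abs, abs_of_nonneg (by positivity)]
    have : Real.exp t ≤ 2 * Real.cosh t := by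
      rw [Real.cosh_eq]; nlinarith [Real.exp_pos (-t)]
    have h2 : (0:ℝ) < Real.exp (-z * Real.cosh t) := Real.exp_pos _
    calc Real.exp t * Real.exp (-z * Real.cosh t)
        ≤ 2 * Real.cosh t * Real.exp (-z * Real.cosh t) := by nlinarith
      _ = 2 * h t := by rw [hh]; ring
  have heq : ∫ t : ℝ, Real.exp (-t) * Real.exp (-z * Real.cosh t)
      = ∫ t : ℝ, Real.exp t * Real.exp (-z * Real.cosh t) := by
    rw [← integral_neg_eq_self (fun t : ℝ => Real.exp t * Real.exp (-z * Real.cosh t)) volume]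
    simp [Real.cosh_neg]
  have hsum : (∫ t : ℝ, Real.exp (-t) * Real.exp (-z * Real.cosh t))
      + ∫ t : ℝ, Real.exp t * Real.exp (-z * Real.cosh t) = 2 * ∫ t : ℝ, h t := by
    rw [← integral_add hf1 hf2, ← integral_const_mul]
    exact integral_congr_ae (Filter.Eventually.of_forall key)
  have habs : ∫ t : ℝ, h t = 2 * besselK 1 z := by
    have : ∀ t : ℝ, h t = Real.cosh |t| * Real.exp (-z * Real.cosh |t|) := by
      intro t; rw [hh]; simp [Real.cosh_abs]
    rw [integral_congr_ae (Filter.Eventually.of_forall this),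
      integral_comp_abs (f := fun t => Real.cosh t * Real.exp (-z * Real.cosh t))]
    unfold besselK
    congr 1
    refine setIntegral_congr_fun measurableSet_Ioi fun t _ => ?_
    rw [one_mul]; ring
  linarith [heq, hsum, habs]

/-- The Lévy measure of a Brownian motion with drift `a > 0` subordinated by an independent
1/2-stable subordinator has density `ν(x) = (a e^{ax}/π) K₁(a|x|)/|x|` on `ℝ \ {0}`. -/
theorem subordinated_levy_density_closed_form (a x : ℝ) (ha : 0 < a) (hx : x ≠ 0) :
    ∫ s in Set.Ioi (0:ℝ),
        (1 / Real.sqrt (2 * π * s)) * Real.exp (-(x - a * s) ^ 2 / (2 * s)) *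
          ((1 / Real.sqrt (2 * π)) * s ^ (-(3:ℝ)/2))
      = a * Real.exp (a * x) * besselK 1 (a * |x|) / (π * |x|) := by
  have hc : (0:ℝ) < |x| := abs_pos.mpr hx
  set c : ℝ := |x| with hcdef
  set z : ℝ := a * c with hzdef
  have hz : 0 < z := mul_pos ha hc
  have hπ : (0:ℝ) < π := Real.pi_pos
  -- Step A: rewrite the integrand
  have stepA : ∫ s in Set.Ioi (0:ℝ),
        (1 / Real.sqrt (2 * π * s)) * Real.exp (-(x - a * s) ^ 2 / (2 * s)) *
          ((1 / Real.sqrt (2 * π)) * s ^ (-(3:ℝ)/2))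
      = ∫ s in Set.Ioi (0:ℝ),
          (Real.exp (a * x) / (2 * π)) *
            (1 / s ^ 2 * Real.exp (-(x ^ 2 / (2 * s) + a ^ 2 * s / 2))) := by
    refine setIntegral_congr_fun measurableSet_Ioi fun s hs => ?_
    have hs0 : (0:ℝ) < s := hs
    have hsq : Real.sqrt (2 * π * s) = Real.sqrt (2 * π) * Real.sqrt s :=
      Real.sqrt_mul (by positivity) s
    have hrpow : s ^ (-(3:ℝ)/2) = 1 / (s * Real.sqrt s) := by
      rw [show (-(3:ℝ)/2) = -((3:ℝ)/2) by norm_num, Real.rpow_neg hs0.le,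
        show ((3:ℝ)/2) = 1 + 1/2 by norm_num, Real.rpow_add hs0, Real.rpow_one,
        ← Real.sqrt_eq_rpow]
      rw [one_div]
    have hexp : Real.exp (-(x - a * s) ^ 2 / (2 * s))
        = Real.exp (a * x) * Real.exp (-(x ^ 2 / (2 * s) + a ^ 2 * s / 2)) := by
      rw [← Real.exp_add]
      congr 1
      field_simp
      ring
    have h2π : (0:ℝ) < Real.sqrt (2 * π) := Real.sqrt_pos.mpr (by positivity)
    have hss : (0:ℝ) < Real.sqrt s := Real.sqrt_pos.mpr hs0
    have hmul : Real.sqrt (2 * π) * Real.sqrt (2 * π) = 2 * π :=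
      Real.mul_self_sqrt (by positivity)
    have hms : Real.sqrt s * Real.sqrt s = s := Real.mul_self_sqrt hs0.le
    rw [hsq, hrpow, hexp, ← hmul, ← hms]
    field_simp
    rw [Real.sqrt_sq h2π.le, Real.sqrt_sq hss.le]
  -- Step B: change of variables s = (c/a) * exp t
  have stepB : ∫ s in Set.Ioi (0:ℝ),
        1 / s ^ 2 * Real.exp (-(x ^ 2 / (2 * s) + a ^ 2 * s / 2))
      = (a / c) * ∫ t : ℝ, Real.exp (-t) * Real.exp (-z * Real.cosh t) := by
    have himg : (fun t : ℝ => c / a * Real.exp t) '' univ = Ioi 0 := by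
      rw [image_univ]
      ext y
      simp only [mem_range, mem_Ioi]
      constructor
      · rintro ⟨t, rfl⟩; positivity
      · intro hy
        refine ⟨Real.log (a * y / c), ?_⟩
        rw [Real.exp_log (by positivity)]
        field_simp
    have hderiv : ∀ t ∈ (univ : Set ℝ), HasDerivWithinAt (fun t : ℝ => c / a * Real.exp t)
        (c / a * Real.exp t) univ t := fun t _ =>
      ((Real.hasDerivAt_exp t).const_mul (c / a)).hasDerivWithinAt
    have hinj : InjOn (fun t : ℝ => c / a * Real.exp t) univ := by
      intro u _ v _ huv
      have hca : c / a ≠ 0 := by positivity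
      exact Real.exp_injective (mul_left_cancel₀ hca huv)
    have := integral_image_eq_integral_abs_deriv_smul (f' := fun t => c / a * Real.exp t)
      MeasurableSet.univ hderiv hinj
      (fun s => 1 / s ^ 2 * Real.exp (-(x ^ 2 / (2 * s) + a ^ 2 * s / 2)))
    rw [himg] at this
    rw [this, Measure.restrict_univ, ← integral_const_mul]
    refine integral_congr_ae (Filter.Eventually.of_forall fun t => ?_)
    dsimp only
    have hca : (0:ℝ) < c / a := by positivity
    have het : (0:ℝ) < Real.exp t := Real.exp_pos t
    have hx2 : x ^ 2 = c ^ 2 := (sq_abs x).symm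
    have harg : x ^ 2 / (2 * (c / a * Real.exp t)) + a ^ 2 * (c / a * Real.exp t) / 2
        = z * Real.cosh t := by
      rw [hx2, Real.cosh_eq, hzdef, Real.exp_neg]
      field_simp
      ring
    rw [smul_eq_mul, harg, abs_of_pos (by positivity), neg_mul,
      show Real.exp (-t) = (Real.exp t)⁻¹ from Real.exp_neg t]
    field_simp
  rw [stepA, integral_const_mul, stepB, exp_neg_mul_cosh_integral hz]
  field_simp
end

section
/- Let a > 0 and ε > 0. Then lim_{t→0⁺} sup_{|x| ≥ ε} | (a e^{ax}/π) · K₁(a√(x²+t²))/√(x²+t²) − (a e^{ax}/π) · K₁(a|x|)/|x| | = 0. Equivalently, for the Brownian motion with drift a subordinated by an independent 1/2-stable subordinator, p_t(x)/t converges to the Lévy density ν(x) = (a e^{ax}/π) K₁(a|x|)/|x| uniformly on {|x| ≥ ε} as t → 0⁺, where p_t(x) = (a t e^{ax}/π) K₁(a√(x²+t²))/√(x²+t²). -/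
open Real MeasureTheory Filter Topology

/-- Auxiliary integral `∫₀^∞ e^{-z cosh u} cosh^k u du`. -/
noncomputable def besselI (k : ℕ) (z : ℝ) : ℝ :=
  ∫ u in Set.Ioi (0:ℝ), Real.exp (-z * Real.cosh u) * Real.cosh u ^ k

lemma besselK_one (z : ℝ) : besselK 1 z = besselI 1 z := by
  simp [besselK, besselI]

lemma cosh_le_exp_of_nonneg {u : ℝ} (hu : 0 ≤ u) : Real.cosh u ≤ Real.exp u := by
  rw [Real.cosh_eq]
  have : Real.exp (-u) ≤ Real.exp u := Real.exp_le_exp.2 (by linarith)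
  linarith

lemma sq_div_eight_le_cosh {u : ℝ} (hu : 0 ≤ u) : u ^ 2 / 8 ≤ Real.cosh u := by
  have h1 : u / 2 + 1 ≤ Real.exp (u / 2) := Real.add_one_le_exp _
  have h2 : (u / 2) ^ 2 ≤ Real.exp (u / 2) ^ 2 := by
    apply sq_le_sq' <;> nlinarith
  rw [← Real.exp_nat_mul] at h2
  have h3 : ((2:ℕ) : ℝ) * (u / 2) = u := by push_cast; ring
  rw [h3] at h2
  rw [Real.cosh_eq]
  have h4 : 0 < Real.exp (-u) := Real.exp_pos _
  nlinarith

lemma besselI_integrableOn {k : ℕ} (hk : k ≤ 2) {z : ℝ} (hz : 0 < z) :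
    IntegrableOn (fun u => Real.exp (-z * Real.cosh u) * Real.cosh u ^ k) (Set.Ioi (0:ℝ)) := by
  have hg : IntegrableOn (fun u => Real.exp (25 / z) * Real.exp (-1 * u)) (Set.Ioi (0:ℝ)) :=
    (exp_neg_integrableOn_Ioi 0 one_pos).const_mul _
  refine Integrable.mono' hg ?_ ?_
  · exact (Continuous.aestronglyMeasurable (by fun_prop))
  · filter_upwards [ae_restrict_mem measurableSet_Ioi] with u hu
    have hu0 : (0:ℝ) ≤ u := le_of_lt hu
    have h1 : Real.cosh u ^ k ≤ Real.exp u ^ 2 := by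
      calc Real.cosh u ^ k ≤ Real.cosh u ^ 2 :=
            pow_le_pow_right₀ (Real.one_le_cosh u) hk
        _ ≤ Real.exp u ^ 2 := by
            apply pow_le_pow_left₀ (Real.cosh_pos u).le (cosh_le_exp_of_nonneg hu0)
    have h2 : z * (u ^ 2 / 8) ≤ z * Real.cosh u :=
      mul_le_mul_of_nonneg_left (sq_div_eight_le_cosh hu0) hz.le
    have hkey : 2 * u - z * (u ^ 2 / 8) ≤ 25 / z - u := by
      have h25 : 25 / z = 25 * z⁻¹ := by ring
      rw [h25, ← sub_nonneg]
      have hzi : z⁻¹ > 0 := inv_pos.2 hz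
      have hzz : z * z⁻¹ = 1 := mul_inv_cancel₀ hz.ne'
      have key : 3 * u * z - 25 ≤ z ^ 2 * u ^ 2 / 8 := by nlinarith [sq_nonneg (z * u - 12)]
      nlinarith [mul_le_mul_of_nonneg_left key hzi.le, hzz]
    have : Real.exp (-z * Real.cosh u) * Real.cosh u ^ k ≤
        Real.exp (25 / z) * Real.exp (-1 * u) := by
      calc Real.exp (-z * Real.cosh u) * Real.cosh u ^ k
          ≤ Real.exp (-z * Real.cosh u) * Real.exp u ^ 2 := by
            apply mul_le_mul_of_nonneg_left h1 (Real.exp_pos _).le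
        _ = Real.exp (2 * u - z * Real.cosh u) := by
            rw [← Real.exp_nat_mul, ← Real.exp_add]; ring_nf
        _ ≤ Real.exp (25 / z - u) := Real.exp_le_exp.2 (by linarith)
        _ = Real.exp (25 / z) * Real.exp (-1 * u) := by
            rw [← Real.exp_add]; ring_nf
    rw [Real.norm_eq_abs, abs_of_nonneg (by positivity)]
    exact this

lemma besselI_nonneg (k : ℕ) {z : ℝ} : 0 ≤ besselI k z := by
  apply setIntegral_nonneg measurableSet_Ioi
  intro u _
  positivity

lemma exp_mul_besselI_anti {k : ℕ} (hk : k ≤ 2) {z₁ z₂ : ℝ} (h1 : 0 < z₁) (h12 : z₁ ≤ z₂) :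
    Real.exp z₂ * besselI k z₂ ≤ Real.exp z₁ * besselI k z₁ := by
  have h2 : 0 < z₂ := h1.trans_le h12
  have heq : ∀ z : ℝ, (fun u => Real.exp z * (Real.exp (-z * Real.cosh u) * Real.cosh u ^ k))
      = fun u => Real.exp (z - z * Real.cosh u) * Real.cosh u ^ k := by
    intro z; funext u; rw [← mul_assoc, ← Real.exp_add]; ring_nf
  have e1 : ∀ z : ℝ, Real.exp z * besselI k z =
      ∫ u in Set.Ioi (0:ℝ), Real.exp (z - z * Real.cosh u) * Real.cosh u ^ k := by
    intro z
    rw [besselI, ← integral_const_mul, ← heq z]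
  have hint : ∀ z : ℝ, 0 < z → IntegrableOn
      (fun u => Real.exp (z - z * Real.cosh u) * Real.cosh u ^ k) (Set.Ioi (0:ℝ)) := by
    intro z hz
    have := (besselI_integrableOn hk hz).const_mul (Real.exp z)
    exact (heq z) ▸ this
  rw [e1, e1]
  apply setIntegral_mono_on (hint _ h2) (hint _ h1) measurableSet_Ioi
  intro u _
  have hc : 1 ≤ Real.cosh u := Real.one_le_cosh u
  have : z₂ - z₂ * Real.cosh u ≤ z₁ - z₁ * Real.cosh u := by nlinarith
  exact mul_le_mul_of_nonneg_right (Real.exp_le_exp.2 this) (by positivity)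

lemma besselI_anti {k : ℕ} (hk : k ≤ 2) {z₁ z₂ : ℝ} (h1 : 0 < z₁) (h12 : z₁ ≤ z₂) :
    besselI k z₂ ≤ besselI k z₁ := by
  have h2 : 0 < z₂ := h1.trans_le h12
  apply setIntegral_mono_on (besselI_integrableOn hk h2) (besselI_integrableOn hk h1)
    measurableSet_Ioi
  intro u _
  have hc : 1 ≤ Real.cosh u := Real.one_le_cosh u
  have : -z₂ * Real.cosh u ≤ -z₁ * Real.cosh u := by nlinarith
  exact mul_le_mul_of_nonneg_right (Real.exp_le_exp.2 this) (by positivity)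

lemma besselI_sub_le {z₁ z₂ : ℝ} (h1 : 0 < z₁) (h12 : z₁ ≤ z₂) :
    besselI 1 z₁ - besselI 1 z₂ ≤ (z₂ - z₁) * besselI 2 z₁ := by
  have h2 : 0 < z₂ := h1.trans_le h12
  rw [besselI, besselI, besselI,
    ← integral_sub (besselI_integrableOn one_le_two h1) (besselI_integrableOn one_le_two h2),
    ← integral_const_mul]
  apply setIntegral_mono_on
    ((besselI_integrableOn one_le_two h1).sub (besselI_integrableOn one_le_two h2))
    ((besselI_integrableOn le_rfl h1).const_mul _) measurableSet_Ioi
  intro u _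
  have hc : 1 ≤ Real.cosh u := Real.one_le_cosh u
  have hc0 : 0 < Real.cosh u := by linarith
  have hE : 1 - (z₂ - z₁) * Real.cosh u ≤ Real.exp (-((z₂ - z₁) * Real.cosh u)) := by
    have := Real.add_one_le_exp (-((z₂ - z₁) * Real.cosh u))
    linarith
  have hsplit : Real.exp (-z₂ * Real.cosh u)
      = Real.exp (-z₁ * Real.cosh u) * Real.exp (-((z₂ - z₁) * Real.cosh u)) := by
    rw [← Real.exp_add]; ring_nf
  have hP : (0:ℝ) < Real.exp (-z₁ * Real.cosh u) := Real.exp_pos _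
  simp only [Pi.sub_apply]
  rw [hsplit]
  nlinarith [mul_le_mul_of_nonneg_left hE hP.le, sq_nonneg (Real.cosh u),
    mul_pos hP hc0, sq_nonneg (Real.cosh u - 1)]

lemma key_estimate {a ε r s : ℝ} (ha : 0 < a) (hε : 0 < ε) (hεr : ε ≤ r) (hrs : r ≤ s) :
    0 ≤ besselI 1 (a*r)/r - besselI 1 (a*s)/s ∧
    Real.exp (a*r) * (besselI 1 (a*r)/r - besselI 1 (a*s)/s) ≤
      (s - r) * (Real.exp (a*ε) * besselI 1 (a*ε) / ε^2
        + a * (Real.exp (a*ε) * besselI 2 (a*ε)) / ε) := by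
  have hr : 0 < r := hε.trans_le hεr
  have hs : 0 < s := hr.trans_le hrs
  have haε : 0 < a * ε := by positivity
  have haεr : a * ε ≤ a * r := by nlinarith
  have haεs : a * ε ≤ a * s := by nlinarith
  have hars : a * r ≤ a * s := by nlinarith
  have har : 0 < a * r := by positivity
  set K1r := besselI 1 (a*r) with hK1r
  set K1s := besselI 1 (a*s) with hK1s
  set J := besselI 2 (a*r) with hJ
  set A := Real.exp (a*ε) * besselI 1 (a*ε) with hA
  set B := Real.exp (a*ε) * besselI 2 (a*ε) with hB
  set E := Real.exp (a*r) with hE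
  have hK1r0 : 0 ≤ K1r := besselI_nonneg 1
  have hK1s0 : 0 ≤ K1s := besselI_nonneg 1
  have hJ0 : 0 ≤ J := besselI_nonneg 2
  have hE0 : 0 < E := Real.exp_pos _
  have hKmono : K1s ≤ K1r := besselI_anti one_le_two har hars
  constructor
  · have h1 : K1s / s ≤ K1r / r := div_le_div₀ hK1r0 hKmono hr hrs
    linarith
  · have hEA : E * K1r ≤ A := exp_mul_besselI_anti one_le_two haε haεr
    have hEB : E * J ≤ B := exp_mul_besselI_anti le_rfl haε haεr
    have hA0 : 0 ≤ A := le_trans (by positivity) hEA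
    have hB0 : 0 ≤ B := le_trans (by positivity) hEB
    have hsub : K1r - K1s ≤ (a * s - a * r) * J := besselI_sub_le har hars
    have hdecomp : E * (K1r / r - K1s / s)
        = E * K1r * (s - r) / (r * s) + E * (K1r - K1s) / s := by
      field_simp
      ring
    rw [hdecomp]
    have hsr0 : 0 ≤ s - r := by linarith
    have step1 : E * K1r * (s - r) / (r * s) ≤ A * (s - r) / ε ^ 2 := by
      apply div_le_div₀ (by positivity) ?_ (by positivity) ?_
      · exact mul_le_mul_of_nonneg_right hEA hsr0
      · nlinarith
    have step2 : E * (K1r - K1s) / s ≤ a * (s - r) * B / ε := by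
      apply div_le_div₀ (by positivity) ?_ hε (by linarith)
      calc E * (K1r - K1s) ≤ E * ((a * s - a * r) * J) :=
            mul_le_mul_of_nonneg_left hsub hE0.le
        _ = a * (s - r) * (E * J) := by ring
        _ ≤ a * (s - r) * B := by
            apply mul_le_mul_of_nonneg_left hEB (by nlinarith)
    calc E * K1r * (s - r) / (r * s) + E * (K1r - K1s) / s
        ≤ A * (s - r) / ε ^ 2 + a * (s - r) * B / ε := add_le_add step1 step2
      _ = (s - r) * (A / ε ^ 2 + a * B / ε) := by ring

set_option maxHeartbeats 1000000 in
/-- For the Brownian motion with drift `a > 0` subordinated by an independent 1/2-stable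
subordinator, `p_t(x)/t = (a e^{ax}/π) K₁(a√(x²+t²))/√(x²+t²)` converges to the Lévy density
`ν(x) = (a e^{ax}/π) K₁(a|x|)/|x|` uniformly on `{|x| ≥ ε}` as `t → 0⁺`. -/
theorem subordinated_density_small_time_uniform (a ε : ℝ) (ha : 0 < a) (hε : 0 < ε) :
    TendstoUniformlyOn
      (fun t x => a * Real.exp (a * x) / π * besselK 1 (a * Real.sqrt (x ^ 2 + t ^ 2)) /
        Real.sqrt (x ^ 2 + t ^ 2))
      (fun x => a * Real.exp (a * x) / π * besselK 1 (a * |x|) / |x|)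
      (𝓝[>] (0:ℝ)) {x : ℝ | ε ≤ |x|} := by
  rw [Metric.tendstoUniformlyOn_iff]
  intro δ hδ
  have hπ : (0:ℝ) < π := Real.pi_pos
  set A := Real.exp (a*ε) * besselI 1 (a*ε) with hA
  set B := Real.exp (a*ε) * besselI 2 (a*ε) with hB
  have hA0 : 0 ≤ A := mul_nonneg (Real.exp_pos _).le (besselI_nonneg 1)
  have hB0 : 0 ≤ B := mul_nonneg (Real.exp_pos _).le (besselI_nonneg 2)
  set C := A / ε^2 + a * B / ε with hC
  have hC0 : 0 ≤ C := add_nonneg (div_nonneg hA0 (sq_nonneg _))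
    (div_nonneg (mul_nonneg ha.le hB0) hε.le)
  set Q := a / π * C / (2*ε) with hQ
  have hQ0 : 0 ≤ Q := div_nonneg (mul_nonneg (div_nonneg ha.le hπ.le) hC0) (by linarith)
  set M := Q + 1 with hM
  have hM0 : 0 < M := by linarith
  have hτ : 0 < min 1 (δ / M) := lt_min one_pos (div_pos hδ hM0)
  filter_upwards [Ioo_mem_nhdsGT_of_mem (Set.mem_Ico.mpr ⟨le_refl (0:ℝ), hτ⟩)] with t ht x hx
  obtain ⟨ht0, htτ⟩ := ht
  have ht1 : t < 1 := lt_of_lt_of_le htτ (min_le_left _ _)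
  have htM : M * t < δ := by
    rw [← lt_div_iff₀' hM0]
    exact lt_of_lt_of_le htτ (min_le_right _ _)
  replace hx : ε ≤ |x| := hx
  set r := |x| with hr'
  set s := Real.sqrt (x^2 + t^2) with hs'
  have hr : 0 < r := hε.trans_le hx
  have hx2 : r^2 = x^2 := sq_abs x
  have hs2 : s^2 = x^2 + t^2 := Real.sq_sqrt (by positivity)
  have hrs : r ≤ s := by
    rw [hr', ← Real.sqrt_sq_eq_abs]
    exact Real.sqrt_le_sqrt (by nlinarith)
  have hs0 : 0 < s := hr.trans_le hrs
  have hsr : s - r ≤ t^2 / (2*ε) := by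
    rw [le_div_iff₀ (by positivity : (0:ℝ) < 2*ε)]
    nlinarith [hs2, hx2, hx, hrs, mul_le_mul_of_nonneg_left (by linarith : 2*ε ≤ s + r)
      (by linarith : (0:ℝ) ≤ s - r)]
  obtain ⟨hpos, hbound⟩ := key_estimate ha hε hx hrs
  rw [Real.dist_eq]
  set D := besselI 1 (a*r)/r - besselI 1 (a*s)/s with hD
  have hdiff : a * Real.exp (a*x) / π * besselK 1 (a * r) / r
      - a * Real.exp (a*x) / π * besselK 1 (a * s) / s
      = a / π * (Real.exp (a*x) * D) := by
    rw [besselK_one, besselK_one, hD]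
    field_simp
  rw [hdiff]
  have hexp : Real.exp (a*x) ≤ Real.exp (a*r) := by
    apply Real.exp_le_exp.2
    have : x ≤ |x| := le_abs_self x
    nlinarith
  have hED : Real.exp (a*x) * D ≤ (s - r) * C := by
    calc Real.exp (a*x) * D ≤ Real.exp (a*r) * D := mul_le_mul_of_nonneg_right hexp hpos
      _ ≤ (s - r) * C := hbound
  have hnn : 0 ≤ a / π * (Real.exp (a*x) * D) := by positivity
  rw [abs_of_nonneg hnn]
  have hsrC : (s - r) * C ≤ t^2 / (2*ε) * C := mul_le_mul_of_nonneg_right hsr hC0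
  calc a / π * (Real.exp (a*x) * D) ≤ a / π * (t^2 / (2*ε) * C) := by
        apply mul_le_mul_of_nonneg_left (le_trans hED hsrC) (by positivity)
    _ = Q * t^2 := by rw [hQ]; ring
    _ ≤ Q * t := mul_le_mul_of_nonneg_left (by nlinarith : t^2 ≤ t) hQ0
    _ < δ := by rw [hM] at htM; nlinarith
end

section
/- Let a > 0 and t₀ > 0. Then lim_{x→∞} sup_{0 < t ≤ t₀} | x · K₁(a√(x²+t²)) / ( √(x²+t²) · K₁(ax) ) − 1 | = 0. Equivalently, for the Brownian motion with drift a subordinated by an independent 1/2-stable subordinator, p_t(x)/(t ν(x)) → 1 as x → ∞, uniformly in t ∈ (0, t₀], where p_t(x) = (a t e^{ax}/π) K₁(a√(x²+t²))/√(x²+t²) and ν(x) = (a e^{ax}/π) K₁(ax)/x for x > 0. -/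
open Real MeasureTheory Filter Topology

open Set

lemma besselK_one_s4 (z : ℝ) :
    besselK 1 z = ∫ t in Set.Ioi (0:ℝ), Real.exp (-z * Real.cosh t) * Real.cosh t := by
  simp [besselK]

lemma cube_le_exp {u : ℝ} (hu : 0 ≤ u) : (u/3)^3 ≤ Real.exp u := by
  have h := Real.add_one_le_exp (u/3)
  calc (u/3)^3 ≤ (u/3+1)^3 := by nlinarith
    _ ≤ (Real.exp (u/3))^3 := by
        apply pow_le_pow_left₀ (by positivity) h
    _ = Real.exp u := by
        rw [← Real.exp_nat_mul]; ring_nf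

lemma sq_mul_exp_neg_le {c u : ℝ} (hc : 0 < c) (hu : 1 ≤ u) :
    u^2 * Real.exp (-(c*u)) ≤ 27 / c^3 := by
  have hu0 : (0:ℝ) ≤ u := by linarith
  have h1 : ((c*u)/3)^3 ≤ Real.exp (c*u) := cube_le_exp (by positivity)
  have hexp : (0:ℝ) < Real.exp (c*u) := Real.exp_pos _
  have hu3 : u^2 ≤ u^3 := by nlinarith
  have key : u^2 * c^3 ≤ 27 * Real.exp (c*u) := by nlinarith
  rw [Real.exp_neg, le_div_iff₀ (by positivity : (0:ℝ) < c^3)]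
  have h2 := mul_le_mul_of_nonneg_right key (inv_nonneg.2 hexp.le)
  rw [mul_assoc, mul_assoc, mul_inv_cancel₀ hexp.ne'] at h2
  calc u^2 * (Real.exp (c*u))⁻¹ * c^3 = u^2 * (c^3 * (Real.exp (c*u))⁻¹) := by ring
    _ ≤ 27 * 1 := h2
    _ = 27 := by ring

lemma self_le_two_cosh (t : ℝ) : t ≤ 2 * Real.cosh t := by
  have h1 : t ≤ Real.exp t := (Real.add_one_le_exp t).trans' (by linarith)
  have h2 : Real.exp t ≤ 2 * Real.cosh t := by
    rw [Real.cosh_eq]; have := (Real.exp_pos (-t)).le; linarith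
  linarith

lemma pointwise_bound {z : ℝ} (hz : 0 < z) (g : ℝ → ℝ)
    (hb : ∀ s, |g s| ≤ (Real.cosh s)^2) (t : ℝ) (ht : 0 < t) :
    ‖Real.exp (-z * Real.cosh t) * g t‖ ≤ (216/z^3) * Real.exp (-(z/4) * t) := by
  have hc1 : (1:ℝ) ≤ Real.cosh t := Real.one_le_cosh t
  have e1 : Real.exp (-z * Real.cosh t)
      = Real.exp (-((z/2) * Real.cosh t)) * Real.exp (-((z/2) * Real.cosh t)) := by
    rw [← Real.exp_add]; ring_nf
  have h1 : (Real.cosh t)^2 * Real.exp (-((z/2) * Real.cosh t)) ≤ 27/(z/2)^3 :=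
    sq_mul_exp_neg_le (by positivity) hc1
  have h27 : (27:ℝ)/(z/2)^3 = 216/z^3 := by field_simp; ring
  have h2 : Real.exp (-((z/2) * Real.cosh t)) ≤ Real.exp (-(z/4) * t) := by
    apply Real.exp_le_exp.2
    have := self_le_two_cosh t
    nlinarith
  rw [norm_mul, Real.norm_eq_abs, Real.norm_eq_abs, abs_of_pos (Real.exp_pos _), e1]
  calc Real.exp (-((z/2) * Real.cosh t)) * Real.exp (-((z/2) * Real.cosh t)) * |g t|
      ≤ Real.exp (-((z/2) * Real.cosh t)) * Real.exp (-((z/2) * Real.cosh t)) * (Real.cosh t)^2 := by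
        apply mul_le_mul_of_nonneg_left (hb t) (by positivity)
    _ = ((Real.cosh t)^2 * Real.exp (-((z/2) * Real.cosh t))) * Real.exp (-((z/2) * Real.cosh t)) := by ring
    _ ≤ (216/z^3) * Real.exp (-(z/4) * t) := by
        rw [← h27]
        apply mul_le_mul h1 h2 (Real.exp_pos _).le (by positivity)

lemma integrableOn_aux {z : ℝ} (hz : 0 < z) (g : ℝ → ℝ) (hg : Continuous g)
    (hb : ∀ s, |g s| ≤ (Real.cosh s)^2) :
    IntegrableOn (fun t => Real.exp (-z * Real.cosh t) * g t) (Set.Ioi (0:ℝ)) := by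
  apply Integrable.mono' (g := fun t => (216/z^3) * Real.exp (-(z/4) * t))
  · exact (exp_neg_integrableOn_Ioi 0 (by positivity : (0:ℝ) < z/4)).const_mul _
  · exact ((Real.continuous_exp.comp (by continuity)).mul hg).aestronglyMeasurable
  · filter_upwards [ae_restrict_mem measurableSet_Ioi] with t ht
    exact pointwise_bound hz g hb t ht

lemma abs_cosh_le_sq (s : ℝ) : |Real.cosh s| ≤ (Real.cosh s)^2 := by
  have h := Real.one_le_cosh s
  rw [abs_of_pos (by linarith)]; nlinarith

lemma abs_sinh_le_sq (s : ℝ) : |Real.sinh s| ≤ (Real.cosh s)^2 := by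
  have h := Real.one_le_cosh s
  have h2 : |Real.sinh s| ≤ Real.cosh s := by
    rw [abs_le]; constructor
    · have := Real.sinh_lt_cosh (-s); rw [Real.sinh_neg, Real.cosh_neg] at this; linarith
    · exact (Real.sinh_lt_cosh s).le
  nlinarith [abs_nonneg (Real.sinh s)]

lemma abs_coshm1_mul_cosh_le_sq (s : ℝ) : |(Real.cosh s - 1) * Real.cosh s| ≤ (Real.cosh s)^2 := by
  have h := Real.one_le_cosh s
  rw [abs_of_nonneg (by nlinarith)]; nlinarith

lemma integrableK1 {z : ℝ} (hz : 0 < z) :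
    IntegrableOn (fun t => Real.exp (-z * Real.cosh t) * Real.cosh t) (Set.Ioi (0:ℝ)) :=
  integrableOn_aux hz _ Real.continuous_cosh abs_cosh_le_sq

lemma integrableSinh {z : ℝ} (hz : 0 < z) :
    IntegrableOn (fun t => Real.exp (-z * Real.cosh t) * Real.sinh t) (Set.Ioi (0:ℝ)) :=
  integrableOn_aux hz _ Real.continuous_sinh abs_sinh_le_sq

lemma integrableG {z : ℝ} (hz : 0 < z) :
    IntegrableOn (fun t => Real.exp (-z * Real.cosh t) * ((Real.cosh t - 1) * Real.cosh t))
      (Set.Ioi (0:ℝ)) :=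
  integrableOn_aux hz _ (by continuity) abs_coshm1_mul_cosh_le_sq

lemma sinh_integral {z : ℝ} (hz : 0 < z) :
    ∫ t in Set.Ioi (0:ℝ), Real.exp (-z * Real.cosh t) * Real.sinh t = Real.exp (-z) / z := by
  have hderiv : ∀ x ∈ Set.Ici (0:ℝ),
      HasDerivAt (fun t => -Real.exp (-z * Real.cosh t) / z)
        (Real.exp (-z * Real.cosh x) * Real.sinh x) x := by
    intro x _
    have h1 : HasDerivAt (fun t => -z * Real.cosh t) (-z * Real.sinh x) x :=
      (Real.hasDerivAt_cosh x).const_mul (-z)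
    have h2 := (h1.exp).neg.div_const z
    exact h2.congr_deriv (by rw [div_eq_iff hz.ne']; ring)
  have htend : Tendsto (fun t => -Real.exp (-z * Real.cosh t) / z) atTop (𝓝 0) := by
    have hcosh : Tendsto Real.cosh atTop atTop := by
      apply tendsto_atTop_mono (fun t => by linarith [self_le_two_cosh t] : ∀ t:ℝ, t/2 ≤ Real.cosh t)
      exact (tendsto_id.atTop_div_const (by norm_num))
    have h1 : Tendsto (fun t : ℝ => -z * Real.cosh t) atTop atBot :=
      hcosh.const_mul_atTop_of_neg (by linarith : -z < 0)
    have h2 := Real.tendsto_exp_atBot.comp h1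
    have h3 := (h2.neg).div_const z
    simpa using h3
  have := integral_Ioi_of_hasDerivAt_of_tendsto' hderiv (integrableSinh hz) htend
  rw [this]
  simp [Real.cosh_zero]
  ring

lemma K1_ge {z : ℝ} (hz : 0 < z) : Real.exp (-z) / z ≤ besselK 1 z := by
  rw [besselK_one_s4, ← sinh_integral hz]
  apply setIntegral_mono_on (integrableSinh hz) (integrableK1 hz) measurableSet_Ioi
  intro t _
  exact mul_le_mul_of_nonneg_left (Real.sinh_lt_cosh t).le (Real.exp_pos _).le

lemma K1_pos {z : ℝ} (hz : 0 < z) : 0 < besselK 1 z :=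
  lt_of_lt_of_le (by positivity) (K1_ge hz)

lemma K1_anti {z z' : ℝ} (hz : 0 < z) (hzz : z ≤ z') : besselK 1 z' ≤ besselK 1 z := by
  rw [besselK_one_s4, besselK_one_s4]
  apply setIntegral_mono_on (integrableK1 (hz.trans_le hzz)) (integrableK1 hz) measurableSet_Ioi
  intro t _
  have hc : (1:ℝ) ≤ Real.cosh t := Real.one_le_cosh t
  apply mul_le_mul_of_nonneg_right _ (by linarith)
  apply Real.exp_le_exp.2
  nlinarith

noncomputable def Gz (z : ℝ) : ℝ :=
  ∫ t in Set.Ioi (0:ℝ), Real.exp (-z * Real.cosh t) * ((Real.cosh t - 1) * Real.cosh t)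

lemma Gz_nonneg {z : ℝ} : 0 ≤ Gz z := by
  apply setIntegral_nonneg measurableSet_Ioi
  intro t _
  have hc : (1:ℝ) ≤ Real.cosh t := Real.one_le_cosh t
  have h2 := (Real.exp_pos (-z * Real.cosh t)).le
  have h3 : 0 ≤ (Real.cosh t - 1) * Real.cosh t := by nlinarith
  exact mul_nonneg h2 h3

lemma Gz_le {z : ℝ} (hz : 2 ≤ z) :
    Gz z ≤ (Real.exp (-(z-1)) / (z-1)) * besselK 1 1 := by
  have hz1 : (0:ℝ) < z - 1 := by linarith
  rw [besselK_one_s4, ← MeasureTheory.integral_const_mul]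
  apply setIntegral_mono_on (integrableG (by linarith)) _ measurableSet_Ioi
  · intro t _
    set c := Real.cosh t with hc_def
    have hc : (1:ℝ) ≤ c := Real.one_le_cosh t
    have hw : (0:ℝ) ≤ (z-1)*(c-1) := by nlinarith
    have hwe : (z-1)*(c-1) ≤ Real.exp ((z-1)*(c-1)) :=
      le_trans (by linarith) (Real.add_one_le_exp _)
    have hsplit : Real.exp (-z * c)
        = Real.exp (-c) * Real.exp (-((z-1)*(c-1))) * Real.exp (-(z-1)) := by
      rw [← Real.exp_add, ← Real.exp_add]; ring_nf
    have hep2 : (0:ℝ) < Real.exp (-((z-1)*(c-1))) := Real.exp_pos _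
    have hwork : (z-1)*(c-1) * Real.exp (-((z-1)*(c-1))) ≤ 1 := by
      have h := mul_le_mul_of_nonneg_right hwe hep2.le
      rwa [← Real.exp_add, add_neg_cancel, Real.exp_zero] at h
    have hec : (0:ℝ) < Real.exp (-c) := Real.exp_pos _
    have hez : (0:ℝ) < Real.exp (-(z-1)) := Real.exp_pos _
    calc Real.exp (-z*c) * ((c-1)*c)
        = (Real.exp (-(z-1))/(z-1)) * ((z-1) * ((c-1) * Real.exp (-((z-1)*(c-1))))
            * (Real.exp (-c) * c)) := by rw [hsplit]; field_simp
      _ ≤ (Real.exp (-(z-1))/(z-1)) * (Real.exp (-1 * c) * c) := by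
          apply mul_le_mul_of_nonneg_left _ (by positivity)
          have h1 : (z-1) * ((c-1) * Real.exp (-((z-1)*(c-1)))) ≤ 1 := by
            rw [← mul_assoc]; exact hwork
          calc (z-1) * ((c-1) * Real.exp (-((z-1)*(c-1)))) * (Real.exp (-c) * c)
              ≤ 1 * (Real.exp (-c) * c) := by
                apply mul_le_mul_of_nonneg_right h1 (by positivity)
            _ = Real.exp (-1 * c) * c := by rw [one_mul, neg_one_mul]
  · exact (integrableK1 one_pos).const_mul _

lemma K1_lower {z z' : ℝ} (hz : 0 < z) (hzz : z ≤ z') :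
    Real.exp (-(z'-z)) * (besselK 1 z - (z'-z) * Gz z) ≤ besselK 1 z' := by
  have hint : ∫ t in Set.Ioi (0:ℝ),
      Real.exp (-(z'-z)) * (Real.exp (-z * Real.cosh t) * Real.cosh t
        - (z'-z) * (Real.exp (-z * Real.cosh t) * ((Real.cosh t - 1) * Real.cosh t)))
      = Real.exp (-(z'-z)) * (besselK 1 z - (z'-z) * Gz z) := by
    rw [MeasureTheory.integral_const_mul, integral_sub (integrableK1 hz)
      ((integrableG hz).const_mul _), MeasureTheory.integral_const_mul, besselK_one_s4, Gz]
  rw [besselK_one_s4 z', ← hint]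
  apply setIntegral_mono_on _ (integrableK1 (hz.trans_le hzz)) measurableSet_Ioi
  · intro t _
    set c := Real.cosh t with hc_def
    have hc : (1:ℝ) ≤ c := Real.one_le_cosh t
    have hε : (0:ℝ) ≤ z' - z := by linarith
    have he : Real.exp (-z' * c) = Real.exp (-z * c) * Real.exp (-(z'-z)) *
        Real.exp (-((z'-z)*(c-1))) := by
      rw [← Real.exp_add, ← Real.exp_add]; ring_nf
    have hb : 1 - (z'-z)*(c-1) ≤ Real.exp (-((z'-z)*(c-1))) := by
      have := Real.add_one_le_exp (-((z'-z)*(c-1))); linarith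
    calc Real.exp (-(z'-z)) * (Real.exp (-z*c)*c - (z'-z)*(Real.exp (-z*c)*((c-1)*c)))
        = (Real.exp (-(z'-z)) * Real.exp (-z*c) * c) * (1 - (z'-z)*(c-1)) := by ring
      _ ≤ (Real.exp (-(z'-z)) * Real.exp (-z*c) * c) * Real.exp (-((z'-z)*(c-1))) := by
          apply mul_le_mul_of_nonneg_left hb (by positivity)
      _ = Real.exp (-z'*c)*c := by rw [he]; ring
  · exact ((integrableK1 hz).sub ((integrableG hz).const_mul _)).const_mul _

lemma ratio_lower {z z' : ℝ} (hz : 2 ≤ z) (hzz : z ≤ z') :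
    Real.exp (-(z'-z)) * (1 - (z'-z) * (2 * Real.exp 1 * besselK 1 1))
      ≤ besselK 1 z' / besselK 1 z := by
  have h0 : (0:ℝ) < z := by linarith
  have hK : 0 < besselK 1 z := K1_pos h0
  have hK1 : 0 < besselK 1 1 := K1_pos one_pos
  have hKz : Real.exp (-z)/z ≤ besselK 1 z := K1_ge h0
  have hG : Gz z ≤ Real.exp (-(z-1))/(z-1) * besselK 1 1 := Gz_le hz
  have hGK : Gz z ≤ (2 * Real.exp 1 * besselK 1 1) * besselK 1 z := by
    have he : Real.exp (-(z-1)) = Real.exp 1 * Real.exp (-z) := by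
      rw [← Real.exp_add]; ring_nf
    have h2 : Real.exp (-(z-1))/(z-1) * besselK 1 1
        ≤ (2 * Real.exp 1 * besselK 1 1) * (Real.exp (-z)/z) := by
      rw [he]
      rw [div_mul_eq_mul_div, div_le_iff₀ (by linarith : (0:ℝ) < z - 1)]
      rw [mul_comm (2 * Real.exp 1 * besselK 1 1) _, div_mul_eq_mul_div,
        div_mul_eq_mul_div, le_div_iff₀ h0]
      have hexp := (Real.exp_pos (-z)).le
      have hexp1 := (Real.exp_pos 1).le
      nlinarith [mul_nonneg (mul_nonneg (mul_nonneg hexp1 hexp) hK1.le)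
        (by linarith : (0:ℝ) ≤ z - 2)]
    calc Gz z ≤ Real.exp (-(z-1))/(z-1) * besselK 1 1 := hG
      _ ≤ (2 * Real.exp 1 * besselK 1 1) * (Real.exp (-z)/z) := h2
      _ ≤ (2 * Real.exp 1 * besselK 1 1) * besselK 1 z := by
          apply mul_le_mul_of_nonneg_left hKz (by positivity)
  rw [le_div_iff₀ hK]
  calc Real.exp (-(z'-z)) * (1 - (z'-z) * (2*Real.exp 1*besselK 1 1)) * besselK 1 z
      = Real.exp (-(z'-z)) * (besselK 1 z - (z'-z) * ((2*Real.exp 1*besselK 1 1) * besselK 1 z)) := by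
        ring
    _ ≤ Real.exp (-(z'-z)) * (besselK 1 z - (z'-z) * Gz z) := by
        apply mul_le_mul_of_nonneg_left _ (Real.exp_pos _).le
        have h3 : (z'-z) * Gz z ≤ (z'-z) * ((2*Real.exp 1*besselK 1 1) * besselK 1 z) :=
          mul_le_mul_of_nonneg_left hGK (by linarith)
        linarith
    _ ≤ besselK 1 z' := K1_lower h0 hzz

lemma sqrt_facts {t₀ x : ℝ} (ht₀ : 0 < t₀) (hx : 0 < x) :
    x ≤ Real.sqrt (x^2 + t₀^2) ∧ Real.sqrt (x^2 + t₀^2) ≤ x + t₀ ∧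
      Real.sqrt (x^2 + t₀^2) - x ≤ t₀^2/(2*x) := by
  have h1 : x ≤ Real.sqrt (x^2 + t₀^2) := by
    nth_rewrite 1 [show x = Real.sqrt (x^2) from (Real.sqrt_sq hx.le).symm]
    exact Real.sqrt_le_sqrt (by nlinarith)
  have h2 : Real.sqrt (x^2 + t₀^2) ≤ x + t₀ := by
    rw [show x + t₀ = Real.sqrt ((x+t₀)^2) from (Real.sqrt_sq (by positivity)).symm]
    exact Real.sqrt_le_sqrt (by nlinarith)
  refine ⟨h1, h2, ?_⟩
  have hu2 : (Real.sqrt (x^2 + t₀^2))^2 = x^2 + t₀^2 := Real.sq_sqrt (by positivity)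
  have h3 : (Real.sqrt (x^2 + t₀^2) - x) * (2*x) ≤ t₀^2 := by
    nlinarith [sq_nonneg (Real.sqrt (x^2 + t₀^2) - x)]
  exact (le_div_iff₀ (by positivity : (0:ℝ) < 2*x)).mpr h3

lemma delta_tendsto {t₀ : ℝ} (ht₀ : 0 < t₀) :
    Tendsto (fun x => Real.sqrt (x^2 + t₀^2) - x) atTop (𝓝 0) := by
  apply tendsto_of_tendsto_of_tendsto_of_le_of_le' (g := fun _ : ℝ => (0:ℝ))
    (h := fun x => t₀^2/(2*x)) tendsto_const_nhds
  · have : Tendsto (fun x : ℝ => 2*x) atTop atTop := tendsto_id.const_mul_atTop two_pos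
    exact Tendsto.div_atTop tendsto_const_nhds this
  · filter_upwards [eventually_gt_atTop (0:ℝ)] with x hx
    linarith [(sqrt_facts ht₀ hx).1]
  · filter_upwards [eventually_gt_atTop (0:ℝ)] with x hx
    exact (sqrt_facts ht₀ hx).2.2

lemma ratio_x_tendsto {t₀ : ℝ} (ht₀ : 0 < t₀) :
    Tendsto (fun x => x / Real.sqrt (x^2 + t₀^2)) atTop (𝓝 1) := by
  apply tendsto_of_tendsto_of_tendsto_of_le_of_le' (g := fun x : ℝ => x/(x+t₀))
    (h := fun _ : ℝ => (1:ℝ))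
  · have h0 : Tendsto (fun x : ℝ => t₀/(x+t₀)) atTop (𝓝 0) :=
      Tendsto.div_atTop tendsto_const_nhds (tendsto_atTop_add_const_right _ _ tendsto_id)
    have h1 : Tendsto (fun x : ℝ => 1 - t₀/(x+t₀)) atTop (𝓝 1) := by
      simpa using tendsto_const_nhds.sub h0
    apply h1.congr'
    filter_upwards [eventually_gt_atTop (0:ℝ)] with x hx
    have : x + t₀ ≠ 0 := by positivity
    field_simp
    ring
  · exact tendsto_const_nhds
  · filter_upwards [eventually_gt_atTop (0:ℝ)] with x hx
    obtain ⟨h1, h2, _⟩ := sqrt_facts ht₀ hx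
    have hu : (0:ℝ) < Real.sqrt (x^2 + t₀^2) := by linarith
    exact div_le_div_of_nonneg_left hx.le hu h2
  · filter_upwards [eventually_gt_atTop (0:ℝ)] with x hx
    obtain ⟨h1, _, _⟩ := sqrt_facts ht₀ hx
    rw [div_le_one (by linarith)]
    exact h1

lemma phi_tendsto (a t₀ C : ℝ) (ha : 0 < a) (ht₀ : 0 < t₀) :
    Tendsto (fun x => (x / Real.sqrt (x^2+t₀^2)) *
      (Real.exp (-(a*Real.sqrt (x^2+t₀^2) - a*x)) *
        (1 - (a*Real.sqrt (x^2+t₀^2) - a*x) * C))) atTop (𝓝 1) := by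
  have hδ : Tendsto (fun x => a*Real.sqrt (x^2+t₀^2) - a*x) atTop (𝓝 0) := by
    have := (delta_tendsto ht₀).const_mul a
    rw [mul_zero] at this
    exact this.congr (fun x => by ring)
  have hexp : Tendsto (fun x => Real.exp (-(a*Real.sqrt (x^2+t₀^2) - a*x))) atTop (𝓝 1) := by
    have h0 := hδ.neg
    rw [neg_zero] at h0
    have h2 := (Real.continuous_exp.tendsto 0).comp h0
    rw [Real.exp_zero] at h2
    simpa [Function.comp_def] using h2
  have hlin : Tendsto (fun x => 1 - (a*Real.sqrt (x^2+t₀^2) - a*x) * C) atTop (𝓝 1) := by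
    have h2 := (tendsto_const_nhds (x := (1:ℝ))).sub (hδ.mul_const C)
    simpa using h2
  have := (ratio_x_tendsto ht₀).mul (hexp.mul hlin)
  simpa using this

/-- For the Brownian motion with drift `a > 0` subordinated by an independent 1/2-stable
subordinator, `p_t(x)/(t ν(x)) = x K₁(a√(x²+t²)) / (√(x²+t²) K₁(ax))` tends to `1` as
`x → ∞`, uniformly in `t ∈ (0, t₀]`. -/
theorem subordinated_density_large_x_uniform (a t₀ : ℝ) (ha : 0 < a) (ht₀ : 0 < t₀) :
    TendstoUniformlyOn
      (fun x t => x * besselK 1 (a * Real.sqrt (x ^ 2 + t ^ 2)) /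
        (Real.sqrt (x ^ 2 + t ^ 2) * besselK 1 (a * x)))
      (fun _ => 1) Filter.atTop (Set.Ioc (0:ℝ) t₀) := by
  set C := 2 * Real.exp 1 * besselK 1 1 with hC
  have hφ := phi_tendsto a t₀ C ha ht₀
  rw [Metric.tendstoUniformlyOn_iff]
  intro ε hε
  have hev1 : ∀ᶠ x in atTop, 1 - ε <
      (x / Real.sqrt (x^2+t₀^2)) * (Real.exp (-(a*Real.sqrt (x^2+t₀^2) - a*x)) *
        (1 - (a*Real.sqrt (x^2+t₀^2) - a*x) * C)) :=
    hφ.eventually (eventually_gt_nhds (by linarith))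
  filter_upwards [hev1, eventually_ge_atTop (max 1 (2/a))] with x hx1 hx2 t ht
  obtain ⟨ht0, htt0⟩ := ht
  have hx0 : (0:ℝ) < x := lt_of_lt_of_le one_pos (le_trans (le_max_left _ _) hx2)
  have hax : 2 ≤ a * x := by
    have h := le_trans (le_max_right 1 (2/a)) hx2
    rw [div_le_iff₀ ha] at h
    linarith [mul_comm x a]
  set s := Real.sqrt (x^2 + t^2) with hs
  set s₀ := Real.sqrt (x^2 + t₀^2) with hs₀
  have hxs : x ≤ s := (sqrt_facts ht0 hx0).1
  have hss₀ : s ≤ s₀ := Real.sqrt_le_sqrt (by nlinarith)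
  have hs0 : 0 < s := lt_of_lt_of_le hx0 hxs
  have hs₀0 : 0 < s₀ := lt_of_lt_of_le hs0 hss₀
  have haxs : a*x ≤ a*s := by nlinarith
  have hass₀ : a*s ≤ a*s₀ := by nlinarith
  have hKx : 0 < besselK 1 (a*x) := K1_pos (by linarith)
  have hKs : 0 < besselK 1 (a*s) := K1_pos (by nlinarith)
  have hKs₀ : 0 < besselK 1 (a*s₀) := K1_pos (by nlinarith)
  have hanti1 : besselK 1 (a*s) ≤ besselK 1 (a*x) := K1_anti (by linarith) haxs
  have hanti2 : besselK 1 (a*s₀) ≤ besselK 1 (a*s) := K1_anti (by nlinarith) hass₀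
  set r := x * besselK 1 (a*s) / (s * besselK 1 (a*x)) with hr
  have hr1 : r ≤ 1 := by
    rw [hr, div_le_one (by positivity)]
    calc x * besselK 1 (a*s) ≤ s * besselK 1 (a*s) := mul_le_mul_of_nonneg_right hxs hKs.le
      _ ≤ s * besselK 1 (a*x) := mul_le_mul_of_nonneg_left hanti1 hs0.le
  have hrlow : (x / s₀) * (Real.exp (-(a*s₀ - a*x)) * (1 - (a*s₀ - a*x) * C)) ≤ r := by
    have hA : Real.exp (-(a*s₀-a*x)) * (1 - (a*s₀-a*x)*C)
        ≤ besselK 1 (a*s₀) / besselK 1 (a*x) := ratio_lower hax (by linarith)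
    calc (x/s₀) * (Real.exp (-(a*s₀-a*x)) * (1-(a*s₀-a*x)*C))
        ≤ (x/s₀) * (besselK 1 (a*s₀)/besselK 1 (a*x)) :=
          mul_le_mul_of_nonneg_left hA (by positivity)
      _ ≤ (x/s) * (besselK 1 (a*s)/besselK 1 (a*x)) := by gcongr
      _ = r := by rw [hr]; field_simp
  have hdist : dist (1:ℝ) r < ε := by
    rw [Real.dist_eq, abs_of_nonneg (by linarith : (0:ℝ) ≤ 1 - r)]
    have hφx : 1 - ε < (x/s₀) * (Real.exp (-(a*s₀ - a*x)) * (1 - (a*s₀ - a*x) * C)) := hx1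
    linarith
  exact hdist
end

section
/- Let a > 0. The function x ↦ a e^{ax} K₁(ax)/(π x) is non-increasing on (0, ∞). That is, the Lévy density of the Brownian motion with drift a subordinated by an independent 1/2-stable subordinator is non-increasing on the positive half-line. -/
open Real MeasureTheory

lemma le_cosh' (t : ℝ) : t ≤ Real.cosh t := by
  rcases le_total t 0 with h | h
  · exact h.trans (by nlinarith [Real.one_le_cosh t])
  · have h1 := Real.add_one_le_exp (t/2)
    have h2 : Real.exp (t/2) * Real.exp (t/2) = Real.exp t := by
      rw [← Real.exp_add]; ring_nf
    have h3 := (Real.exp_pos (-t)).le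
    rw [Real.cosh_eq]
    nlinarith [sq_nonneg (t/2 - 1), (Real.exp_pos (t/2)).le]

lemma integrableK (z : ℝ) (hz : 0 < z) :
    IntegrableOn (fun t => Real.exp (-z * Real.cosh t) * Real.cosh t) (Set.Ioi 0) := by
  have hbound : IntegrableOn (fun t => (2/z) * Real.exp (-(z/2) * t)) (Set.Ioi 0) :=
    (exp_neg_integrableOn_Ioi 0 (by positivity)).const_mul _
  apply hbound.mono'
  · exact Continuous.aestronglyMeasurable (by continuity)
  · filter_upwards [ae_restrict_mem measurableSet_Ioi] with t ht
    have hct : t ≤ Real.cosh t := le_cosh' t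
    have hc1 : (1:ℝ) ≤ Real.cosh t := Real.one_le_cosh t
    have h0 : 0 ≤ Real.exp (-z * Real.cosh t) * Real.cosh t := by positivity
    rw [Real.norm_eq_abs, abs_of_nonneg h0]
    have k1 : z/2 * Real.cosh t ≤ Real.exp (z/2 * Real.cosh t) := by
      nlinarith [Real.add_one_le_exp (z/2 * Real.cosh t)]
    have k2 : Real.cosh t ≤ 2/z * Real.exp (z/2 * Real.cosh t) := by
      have := mul_le_mul_of_nonneg_left k1 (by positivity : (0:ℝ) ≤ 2/z)
      calc Real.cosh t = 2/z * (z/2 * Real.cosh t) := by field_simp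
        _ ≤ 2/z * Real.exp (z/2 * Real.cosh t) := this
    calc Real.exp (-z * Real.cosh t) * Real.cosh t
        ≤ Real.exp (-z * Real.cosh t) * (2/z * Real.exp (z/2 * Real.cosh t)) :=
          mul_le_mul_of_nonneg_left k2 (Real.exp_pos _).le
      _ = 2/z * Real.exp (-z * Real.cosh t + z/2 * Real.cosh t) := by
          rw [Real.exp_add]; ring
      _ = 2/z * Real.exp (-(z/2) * Real.cosh t) := by ring_nf
      _ ≤ 2/z * Real.exp (-(z/2) * t) := by
          have : -(z/2) * Real.cosh t ≤ -(z/2) * t := by nlinarith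
          exact mul_le_mul_of_nonneg_left (Real.exp_le_exp.2 this) (by positivity)

/-- The Lévy density `x ↦ a e^{ax} K₁(ax)/(π x)` of the Brownian motion with drift `a > 0`
subordinated by an independent 1/2-stable subordinator is non-increasing on `(0, ∞)`. -/
theorem subordinated_levy_density_antitone (a : ℝ) (ha : 0 < a) :
    AntitoneOn (fun x => a * Real.exp (a * x) * besselK 1 (a * x) / (π * x))
      (Set.Ioi (0:ℝ)) := by
  intro x hx y hy hxy
  simp only [Set.mem_Ioi] at hx hy
  have hπ := Real.pi_pos
  have hb : ∀ z : ℝ, besselK 1 z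
      = ∫ t in Set.Ioi (0:ℝ), Real.exp (-z * Real.cosh t) * Real.cosh t := by
    intro z; simp [besselK]
  simp only [hb]
  set Iy := ∫ t in Set.Ioi (0:ℝ), Real.exp (-(a*y) * Real.cosh t) * Real.cosh t with hIy
  set Ix := ∫ t in Set.Ioi (0:ℝ), Real.exp (-(a*x) * Real.cosh t) * Real.cosh t with hIx
  have key : Real.exp (a*y) / y * Iy ≤ Real.exp (a*x) / x * Ix := by
    rw [hIy, hIx, ← MeasureTheory.integral_const_mul, ← MeasureTheory.integral_const_mul]
    apply MeasureTheory.setIntegral_mono_on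
    · exact (integrableK (a*y) (by positivity)).const_mul _
    · exact (integrableK (a*x) (by positivity)).const_mul _
    · exact measurableSet_Ioi
    · intro t ht
      have hc1 : (1:ℝ) ≤ Real.cosh t := Real.one_le_cosh t
      have e1 : Real.exp (a*y) / y * (Real.exp (-(a*y) * Real.cosh t) * Real.cosh t)
          = Real.exp (a*y + -(a*y) * Real.cosh t) * Real.cosh t / y := by
        rw [Real.exp_add]; ring
      have e2 : Real.exp (a*x) / x * (Real.exp (-(a*x) * Real.cosh t) * Real.cosh t)
          = Real.exp (a*x + -(a*x) * Real.cosh t) * Real.cosh t / x := by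
        rw [Real.exp_add]; ring
      rw [e1, e2]
      have h1 : Real.exp (a*y + -(a*y) * Real.cosh t)
          ≤ Real.exp (a*x + -(a*x) * Real.cosh t) := by
        apply Real.exp_le_exp.2
        nlinarith [mul_nonneg (mul_nonneg ha.le (sub_nonneg.2 hxy)) (sub_nonneg.2 hc1)]
      exact div_le_div₀ (by positivity)
        (mul_le_mul_of_nonneg_right h1 (by positivity)) hx hxy
  have e1 : a * Real.exp (a*y) * Iy / (π*y) = (a/π) * (Real.exp (a*y) / y * Iy) := by
    field_simp
  have e2 : a * Real.exp (a*x) * Ix / (π*x) = (a/π) * (Real.exp (a*x) / x * Ix) := by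
    field_simp
  rw [e1, e2]
  exact mul_le_mul_of_nonneg_left key (by positivity)
end

section
/- Let a > 0 and α ∈ (0, 2). Then lim_{x→∞} x^{1+α/2} · ( a^{(1+α)/2} e^{ax} K_{(1+α)/2}(ax) / (π x^{(1+α)/2}) ) = a^{α/2}/√(2π). In particular the Lévy density ν(x) = a^{(1+α)/2} e^{ax} K_{(1+α)/2}(a|x|)/(π |x|^{(1+α)/2}) of the Brownian motion with drift a subordinated by an independent α/2-stable subordinator is regularly varying at +∞ with index −(1+α/2). -/
open Real MeasureTheory Filter Topology Set

/-- Scaled integrand used in the Laplace-method analysis of `besselK`. -/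
noncomputable def besselKaux (ν z s : ℝ) : ℝ :=
  Real.exp (-(z * (Real.cosh ((Real.sqrt z)⁻¹ * s) - 1))) *
    Real.cosh (ν * ((Real.sqrt z)⁻¹ * s))

lemma cosh_sub_one_eq (t : ℝ) : Real.cosh t - 1 = 2 * Real.sinh (t / 2) ^ 2 := by
  have h := Real.cosh_two_mul (t / 2)
  have h2 : 2 * (t / 2) = t := by ring
  rw [h2] at h
  rw [h, Real.cosh_sq]
  ring

lemma sq_div_two_le_cosh_sub_one (t : ℝ) : t ^ 2 / 2 ≤ Real.cosh t - 1 := by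
  rw [cosh_sub_one_eq]
  have h1 : |t / 2| ≤ |Real.sinh (t / 2)| := by
    rw [Real.abs_sinh]
    exact Real.self_le_sinh_iff.2 (abs_nonneg _)
  have h2 : (t / 2) ^ 2 ≤ Real.sinh (t / 2) ^ 2 := by
    rw [← sq_abs (t / 2), ← sq_abs (Real.sinh (t / 2))]
    exact pow_le_pow_left₀ (abs_nonneg _) h1 2
  nlinarith

lemma cosh_le_exp_abs (t : ℝ) : Real.cosh t ≤ Real.exp |t| := by
  rw [← Real.cosh_abs, Real.cosh_eq]
  have h1 : Real.exp (-|t|) ≤ Real.exp |t| :=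
    Real.exp_le_exp.2 (by linarith [abs_nonneg t])
  linarith

lemma tendsto_sqrt_atTop' : Tendsto Real.sqrt atTop atTop := by
  refine tendsto_atTop_atTop.2 fun b => ⟨b ^ 2, fun z hz => ?_⟩
  calc b ≤ |b| := le_abs_self b
    _ = Real.sqrt (b ^ 2) := (Real.sqrt_sq_eq_abs b).symm
    _ ≤ Real.sqrt z := Real.sqrt_le_sqrt hz

/-- Key asymptotics: `√z e^z K_ν(z) → √(π/2)` as `z → ∞`. -/
lemma besselK_asymptotic (ν : ℝ) :
    Tendsto (fun z : ℝ => Real.sqrt z * (Real.exp z * besselK ν z)) atTop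
      (𝓝 (Real.sqrt (π / 2))) := by
  -- Step 1: for z > 0, √z e^z K_ν(z) = ∫ s in Ioi 0, besselKaux ν z s
  have step1 : ∀ z : ℝ, 0 < z →
      Real.sqrt z * (Real.exp z * besselK ν z) = ∫ s in Ioi (0:ℝ), besselKaux ν z s := by
    intro z hz
    have hsz : 0 < Real.sqrt z := Real.sqrt_pos.2 hz
    have hK : Real.exp z * besselK ν z
        = ∫ t in Ioi (0:ℝ), Real.exp (-(z * (Real.cosh t - 1))) * Real.cosh (ν * t) := by
      rw [besselK, ← integral_const_mul]
      congr 1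
      funext t
      rw [← mul_assoc, ← Real.exp_add]
      ring_nf
    have hsub := integral_comp_mul_left_Ioi
      (fun t => Real.exp (-(z * (Real.cosh t - 1))) * Real.cosh (ν * t)) 0
      (inv_pos.2 hsz)
    simp only [mul_zero, inv_inv, smul_eq_mul] at hsub
    rw [hK, ← hsub]
    rfl
  -- Step 2: dominated convergence
  have step2 : Tendsto (fun z => ∫ s in Ioi (0:ℝ), besselKaux ν z s) atTop
      (𝓝 (∫ s in Ioi (0:ℝ), Real.exp (-(1/2) * s ^ 2))) := by
    have hbound_int : Integrable
        (fun s => Real.exp (-(1/2) * s ^ 2) * Real.exp (|ν| * s))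
        (volume.restrict (Ioi (0:ℝ))) := by
      have h1 : Integrable (fun s : ℝ => Real.exp (-(1/2) * (s - |ν|) ^ 2)) volume :=
        (integrable_exp_neg_mul_sq (by norm_num : (0:ℝ) < 1/2)).comp_sub_right |ν|
      have h2 : Integrable
          (fun s : ℝ => Real.exp (|ν| ^ 2 / 2) * Real.exp (-(1/2) * (s - |ν|) ^ 2))
          volume := h1.const_mul _
      have heq : (fun s : ℝ => Real.exp (-(1/2) * s ^ 2) * Real.exp (|ν| * s))
          = fun s : ℝ => Real.exp (|ν| ^ 2 / 2) * Real.exp (-(1/2) * (s - |ν|) ^ 2) := by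
        funext s
        rw [← Real.exp_add, ← Real.exp_add]
        congr 1
        ring
      rw [heq]
      exact h2.restrict
    refine tendsto_integral_filter_of_dominated_convergence _ ?_ ?_ hbound_int ?_
    · filter_upwards with z
      apply Continuous.aestronglyMeasurable
      unfold besselKaux
      fun_prop
    · filter_upwards [eventually_ge_atTop (1:ℝ)] with z hz
      rw [ae_restrict_iff' measurableSet_Ioi]
      filter_upwards with s hs
      have hs0 : 0 < s := hs
      have hz0 : (0:ℝ) < z := lt_of_lt_of_le one_pos hz
      have hsz : 1 ≤ Real.sqrt z := by
        rw [show (1:ℝ) = Real.sqrt 1 by simp]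
        exact Real.sqrt_le_sqrt hz
      have hsz0 : 0 < Real.sqrt z := lt_of_lt_of_le one_pos hsz
      unfold besselKaux
      simp only [← div_eq_inv_mul]
      have hnorm : ∀ u v : ℝ, ‖Real.exp u * Real.cosh v‖ = Real.exp u * Real.cosh v := by
        intro u v
        rw [Real.norm_eq_abs, abs_of_nonneg (by positivity)]
      rw [hnorm]
      have hexp : Real.exp (-(z * (Real.cosh (s / Real.sqrt z) - 1)))
          ≤ Real.exp (-(1/2) * s ^ 2) := by
        apply Real.exp_le_exp.2
        have h1 : (s / Real.sqrt z) ^ 2 / 2 ≤ Real.cosh (s / Real.sqrt z) - 1 :=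
          sq_div_two_le_cosh_sub_one _
        have h2 : (s / Real.sqrt z) ^ 2 = s ^ 2 / z := by
          rw [div_pow, Real.sq_sqrt hz0.le]
        have h3 : z * ((s / Real.sqrt z) ^ 2 / 2) = s ^ 2 / 2 := by
          rw [h2]
          field_simp
        have h4 := mul_le_mul_of_nonneg_left h1 hz0.le
        rw [h3] at h4
        nlinarith
      have hcosh : Real.cosh (ν * (s / Real.sqrt z)) ≤ Real.exp (|ν| * s) := by
        calc Real.cosh (ν * (s / Real.sqrt z)) ≤ Real.exp |ν * (s / Real.sqrt z)| :=
              cosh_le_exp_abs _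
          _ ≤ Real.exp (|ν| * s) := by
              apply Real.exp_le_exp.2
              rw [abs_mul, abs_div, abs_of_nonneg hs0.le, abs_of_nonneg hsz0.le]
              calc |ν| * (s / Real.sqrt z) ≤ |ν| * (s / 1) := by
                    apply mul_le_mul_of_nonneg_left _ (abs_nonneg ν)
                    exact div_le_div_of_nonneg_left hs0.le one_pos hsz
                _ = |ν| * s := by rw [div_one]
      exact mul_le_mul hexp hcosh (Real.cosh_pos _).le (Real.exp_pos _).le
    · rw [ae_restrict_iff' measurableSet_Ioi]
      filter_upwards with s hs
      have hs0 : 0 < s := hs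
      have hslope : Tendsto (fun h : ℝ => Real.sinh h / h) (𝓝[≠] (0:ℝ)) (𝓝 1) := by
        have hd := Real.hasDerivAt_sinh 0
        rw [hasDerivAt_iff_tendsto_slope] at hd
        rw [Real.cosh_zero] at hd
        refine hd.congr fun h => ?_
        simp [slope, Real.sinh_zero, div_eq_inv_mul]
      have hh0 : Tendsto (fun z : ℝ => s / (2 * Real.sqrt z)) atTop (𝓝[≠] (0:ℝ)) := by
        apply tendsto_nhdsWithin_of_tendsto_nhds_of_eventually_within
        · exact Tendsto.div_atTop tendsto_const_nhds
            (tendsto_sqrt_atTop'.const_mul_atTop two_pos)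
        · filter_upwards [eventually_gt_atTop (0:ℝ)] with z hz
          have : 0 < s / (2 * Real.sqrt z) := by positivity
          exact this.ne'
      have hA : Tendsto (fun z : ℝ => z * (Real.cosh (s / Real.sqrt z) - 1)) atTop
          (𝓝 (s ^ 2 / 2)) := by
        have h1 : Tendsto (fun z : ℝ =>
            s ^ 2 / 2 * (Real.sinh (s / (2 * Real.sqrt z)) / (s / (2 * Real.sqrt z))) ^ 2)
            atTop (𝓝 (s ^ 2 / 2 * 1 ^ 2)) := by
          have := (hslope.comp hh0).pow 2
          exact this.const_mul _
        rw [one_pow, mul_one] at h1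
        refine h1.congr' ?_
        filter_upwards [eventually_gt_atTop (0:ℝ)] with z hz
        have hsz : 0 < Real.sqrt z := Real.sqrt_pos.2 hz
        have hcos : Real.cosh (s / Real.sqrt z) - 1
            = 2 * Real.sinh (s / (2 * Real.sqrt z)) ^ 2 := by
          rw [cosh_sub_one_eq]
          congr 2
          rw [div_div]
          ring_nf
        have hhsq : (s / (2 * Real.sqrt z)) ^ 2 = s ^ 2 / (4 * z) := by
          rw [div_pow, mul_pow, Real.sq_sqrt hz.le]
          norm_num
        rw [div_pow, hhsq, hcos]
        have hz4 : (4:ℝ) * z ≠ 0 := by positivity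
        field_simp
        ring
      have hB : Tendsto (fun z : ℝ => Real.cosh (ν * (s / Real.sqrt z))) atTop (𝓝 1) := by
        have h1 : Tendsto (fun z : ℝ => ν * (s / Real.sqrt z)) atTop (𝓝 0) := by
          rw [show (0:ℝ) = ν * 0 by ring]
          exact Tendsto.const_mul _
            (Tendsto.div_atTop tendsto_const_nhds tendsto_sqrt_atTop')
        have h2 := (Real.continuous_cosh.tendsto 0).comp h1
        simpa [Function.comp_def] using h2
      have hC : Tendsto (fun z : ℝ =>
          Real.exp (-(z * (Real.cosh (s / Real.sqrt z) - 1)))) atTop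
          (𝓝 (Real.exp (-(s ^ 2 / 2)))) :=
        (Real.continuous_exp.tendsto _).comp hA.neg
      have hD := hC.mul hB
      rw [mul_one] at hD
      rw [show -(1/2 : ℝ) * s ^ 2 = -(s ^ 2 / 2) by ring]
      unfold besselKaux
      simp only [← div_eq_inv_mul]
      exact hD
  -- combine
  have hgauss : (∫ s in Ioi (0:ℝ), Real.exp (-(1/2) * s ^ 2)) = Real.sqrt (π / 2) := by
    rw [integral_gaussian_Ioi (1/2)]
    have h4 : Real.sqrt (π / (1/2)) = 2 * Real.sqrt (π / 2) := by
      rw [show π / (1/2 : ℝ) = 2 ^ 2 * (π / 2) by ring,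
        Real.sqrt_mul (by positivity), Real.sqrt_sq (by norm_num : (0:ℝ) ≤ 2)]
    rw [h4]
    ring
  rw [← hgauss]
  refine step2.congr' ?_
  filter_upwards [eventually_gt_atTop (0:ℝ)] with z hz
  exact (step1 z hz).symm

/-- The Lévy density `ν(x) = a^{(1+α)/2} e^{ax} K_{(1+α)/2}(ax)/(π x^{(1+α)/2})` of the
Brownian motion with drift `a > 0` subordinated by an independent `α/2`-stable subordinator
satisfies `x^{1+α/2} ν(x) → a^{α/2}/√(2π)` as `x → ∞`; in particular it is regularly varying
at `+∞` with index `-(1+α/2)`. -/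
theorem subordinated_levy_density_regular_variation (a α : ℝ) (ha : 0 < a)
    (hα : α ∈ Set.Ioo (0:ℝ) 2) :
    Filter.Tendsto
      (fun x : ℝ => x ^ (1 + α / 2) *
        (a ^ ((1 + α) / 2) * Real.exp (a * x) * besselK ((1 + α) / 2) (a * x) /
          (π * x ^ ((1 + α) / 2))))
      Filter.atTop (𝓝 (a ^ (α / 2) / Real.sqrt (2 * π))) := by
  have key := besselK_asymptotic ((1 + α) / 2)
  have hax : Tendsto (fun x : ℝ => a * x) atTop atTop :=
    tendsto_id.const_mul_atTop ha
  have hcomp := key.comp hax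
  have hmul := hcomp.const_mul (a ^ (α / 2) / π)
  have hval : a ^ (α / 2) / π * Real.sqrt (π / 2) = a ^ (α / 2) / Real.sqrt (2 * π) := by
    have hππ : Real.sqrt (π / 2) * Real.sqrt (2 * π) = π := by
      rw [← Real.sqrt_mul (by positivity), show π / 2 * (2 * π) = π ^ 2 by ring,
        Real.sqrt_sq pi_pos.le]
    rw [div_mul_eq_mul_div, div_eq_div_iff pi_ne_zero
      (Real.sqrt_ne_zero'.2 (by positivity)), mul_assoc, hππ]
  rw [hval] at hmul
  refine hmul.congr' ?_
  filter_upwards [eventually_gt_atTop (0:ℝ)] with x hx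
  simp only [Function.comp]
  have e1 : x ^ (1 + α / 2) = x ^ ((1 + α) / 2) * x ^ ((1:ℝ) / 2) := by
    rw [← Real.rpow_add hx]
    congr 1
    ring
  have e2 : a ^ ((1 + α) / 2) = a ^ (α / 2) * a ^ ((1:ℝ) / 2) := by
    rw [← Real.rpow_add ha]
    congr 1
    ring
  have e3 : Real.sqrt (a * x) = a ^ ((1:ℝ) / 2) * x ^ ((1:ℝ) / 2) := by
    rw [Real.sqrt_eq_rpow, Real.mul_rpow ha.le hx.le]
  have hxp : x ^ ((1 + α) / 2) ≠ 0 := (Real.rpow_pos_of_pos hx _).ne'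
  rw [e1, e2, e3]
  field_simp
end
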